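/- Let G be a finite graph. If H is a minimal triangulation of G, then Δ(H) is a maximal pairwise-parallel set of minimal separators of G and H = G_{Δ(H)}. Conversely, if Φ is any maximal pairwise-parallel set of minimal separators of G, then G_Φ is a minimal triangulation of G and Δ(G_Φ) = Φ. -/

import Mathlib

open scoped NNReal

namespace PMCPP

variable {V : Type} {X : Type}

/-- A graph is chordal if every cycle on four or more vertices has a chord:
for every injective cyclic sequence of `n ≥ 4` vertices with consecutive
vertices adjacent, some pair of non-consecutive vertices of the cycle is adjacent. -/
def IsChordal (G : SimpleGraph V) : Prop :=
  ∀ n : ℕ, 4 ≤ n → ∀ f : ZMod n → V, Function.Injective f →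
    (∀ i, G.Adj (f i) (f (i + 1))) →
    ∃ i j : ZMod n, j ≠ i + 1 ∧ i ≠ j + 1 ∧ G.Adj (f i) (f j)

/-- `H` is a triangulation of `G`: a chordal supergraph on the same vertex set. -/
def IsTriangulation (G H : SimpleGraph V) : Prop := IsChordal H ∧ G ≤ H

/-- The fill edges of a triangulation `H` of `G`. -/
def fillEdges (G H : SimpleGraph V) : Set (Sym2 V) := H.edgeSet \ G.edgeSet

/-- `H` is a minimal triangulation of `G`: no graph obtained from `G` by adding a
proper subset of the fill edges of `H` is a triangulation of `G`. -/
def IsMinimalTriangulation (G H : SimpleGraph V) : Prop :=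
  IsTriangulation G H ∧ ∀ H' : SimpleGraph V, IsTriangulation G H' → H' ≤ H → H' = H

/-- `pf G U`: the potential fill edges of `U`, i.e. pairs of distinct vertices
of `U` that are not edges of `G`. -/
def pf (G : SimpleGraph V) (U : Set V) : Set (Sym2 V) :=
  {e : Sym2 V | ¬e.IsDiag ∧ e ∉ G.edgeSet ∧ ∀ v ∈ e, v ∈ U}

/-- `F(H)`: total weight of the fill edges of the triangulation `H` of `G`
under the fill weight `F`. -/
noncomputable def fillSum (G H : SimpleGraph V) (F : Sym2 V → ℝ≥0) : ℝ≥0 :=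
  ∑ᶠ e ∈ fillEdges G H, F e

/-- `fill_F(U)`: sum of `F` over the potential fill edges of `U`. -/
noncomputable def fillF (G : SimpleGraph V) (F : Sym2 V → ℝ≥0) (U : Set V) : ℝ≥0 :=
  ∑ᶠ e ∈ pf G U, F e

/-- `mfi_F(G)`: the minimum weight of a triangulation of `G`. -/
noncomputable def mfi (G : SimpleGraph V) (F : Sym2 V → ℝ≥0) : ℝ≥0 :=
  sInf {x : ℝ≥0 | ∃ H : SimpleGraph V, IsTriangulation G H ∧ x = fillSum G H F}

/-- `H` is an `F`-minimum triangulation of `G`. -/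
def IsFMinTriangulation (G H : SimpleGraph V) (F : Sym2 V → ℝ≥0) : Prop :=
  IsTriangulation G H ∧ ∀ H' : SimpleGraph V, IsTriangulation G H' →
    fillSum G H F ≤ fillSum G H' F

/-- `H` is an `F`-minimum minimal triangulation of `G`. -/
def IsFMinMinimalTriangulation (G H : SimpleGraph V) (F : Sym2 V → ℝ≥0) : Prop :=
  IsFMinTriangulation G H F ∧ IsMinimalTriangulation G H

/-- There is a walk from `x` to `y` in `G` avoiding `S`. -/
def AvoidReach (G : SimpleGraph V) (S : Set V) (x y : V) : Prop :=
  ∃ p : G.Walk x y, ∀ v ∈ p.support, v ∉ S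

/-- `S` is an `xy`-separator of `G`. -/
def IsSeparator (G : SimpleGraph V) (S : Set V) (x y : V) : Prop :=
  x ∉ S ∧ y ∉ S ∧ G.Reachable x y ∧ ¬AvoidReach G S x y

/-- `S` is a minimal separator of `G`: a minimal `xy`-separator for some `x`, `y`. -/
def IsMinSeparator (G : SimpleGraph V) (S : Set V) : Prop :=
  ∃ x y : V, IsSeparator G S x y ∧ ∀ S' ⊂ S, ¬IsSeparator G S' x y

/-- `Δ(G)`: the set of minimal separators of `G`. -/
def minSeps (G : SimpleGraph V) : Set (Set V) := {S | IsMinSeparator G S}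

/-- `C` is a connected component of `G − S`: a maximal `S`-avoiding-connected
set of vertices disjoint from `S`. -/
def IsCompOf (G : SimpleGraph V) (S C : Set V) : Prop :=
  C.Nonempty ∧ Disjoint C S ∧ (∀ x ∈ C, ∀ y ∈ C, AvoidReach G S x y) ∧
    ∀ C' : Set V, C ⊆ C' → Disjoint C' S →
      (∀ x ∈ C', ∀ y ∈ C', AvoidReach G S x y) → C' = C

/-- `S'` is parallel to `S`: `S'` meets at most one connected component of `G − S`. -/
def Parallel (G : SimpleGraph V) (S S' : Set V) : Prop :=
  {C : Set V | IsCompOf G S C ∧ (C ∩ S').Nonempty}.Subsingleton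

/-- `Φ` is a maximal pairwise-parallel set of minimal separators of `G`. -/
def MaxPairwiseParallel (G : SimpleGraph V) (Φ : Set (Set V)) : Prop :=
  Φ ⊆ minSeps G ∧ Φ.Pairwise (Parallel G) ∧
    ∀ Ψ : Set (Set V), Ψ ⊆ minSeps G → Ψ.Pairwise (Parallel G) → Φ ⊆ Ψ → Ψ = Φ

/-- `G_Φ`: the graph obtained from `G` by saturating every separator in `Φ`. -/
def saturate (G : SimpleGraph V) (Φ : Set (Set V)) : SimpleGraph V where
  Adj u v := u ≠ v ∧ (G.Adj u v ∨ ∃ S ∈ Φ, u ∈ S ∧ v ∈ S)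
  symm := by
    constructor
    rintro u v ⟨h0, h⟩
    refine ⟨h0.symm, ?_⟩
    rcases h with h | ⟨S, hS, hu, hv⟩
    · exact Or.inl h.symm
    · exact Or.inr ⟨S, hS, hv, hu⟩
  loopless := ⟨fun u h => h.1 rfl⟩

/-- `N(C)`: the vertices outside `C` having a neighbor in `C`. -/
def neighborsOf (G : SimpleGraph V) (C : Set V) : Set V :=
  {v | v ∉ C ∧ ∃ u ∈ C, G.Adj u v}

/-- `(S, C)` is a block of `G`. -/
def IsBlock (G : SimpleGraph V) (S C : Set V) : Prop :=
  S ∈ minSeps G ∧ IsCompOf G S C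

/-- `(S, C)` is a full block of `G`: `N(C) = S`. -/
def IsFullBlock (G : SimpleGraph V) (S C : Set V) : Prop :=
  IsBlock G S C ∧ neighborsOf G C = S

/-- The realization `R(S,C)`: the graph on the vertices `S ∪ C` (realized here as
a graph on `V` all of whose edges lie inside `S ∪ C`) whose edges are the edges of
`G` inside `S ∪ C` together with all pairs of distinct vertices of `S`. -/
def realization (G : SimpleGraph V) (S C : Set V) : SimpleGraph V where
  Adj u v := u ≠ v ∧ u ∈ S ∪ C ∧ v ∈ S ∪ C ∧ (G.Adj u v ∨ (u ∈ S ∧ v ∈ S))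
  symm := by
    constructor
    rintro u v ⟨h0, h1, h2, h3⟩
    refine ⟨h0.symm, h2, h1, ?_⟩
    rcases h3 with h | ⟨ha, hb⟩
    · exact Or.inl h.symm
    · exact Or.inr ⟨hb, ha⟩
  loopless := ⟨fun u h => h.1 rfl⟩

/-- `K` is a maximal clique of `H`. -/
def IsMaximalClique (H : SimpleGraph V) (K : Set V) : Prop :=
  H.IsClique K ∧ ∀ K' : Set V, H.IsClique K' → K ⊆ K' → K' = K

/-- `K` is a potential maximal clique of `G`: a maximal clique of some
minimal triangulation of `G`. -/
def IsPMC (G : SimpleGraph V) (K : Set V) : Prop :=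
  ∃ H : SimpleGraph V, IsMinimalTriangulation G H ∧ IsMaximalClique H K

/-- The graph obtained from `G` by adding the set of edges `E'`. -/
def addEdges (G : SimpleGraph V) (E' : Set (Sym2 V)) : SimpleGraph V :=
  G ⊔ SimpleGraph.fromEdgeSet E'

/-- A character on `X`: a partition of a subset of `X`, i.e. a collection of
nonempty pairwise disjoint subsets (cells) of `X`. -/
def IsCharacter (χ : Set (Set X)) : Prop :=
  (∀ A ∈ χ, A.Nonempty) ∧ χ.PairwiseDisjoint id

/-- Vertices of the partition intersection graph of `C`:
pairs `(A, χ)` with `χ ∈ C` and `A` a cell of `χ`. -/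
def PigV (C : Set (Set (Set X))) : Type _ :=
  {p : Set X × Set (Set X) // p.2 ∈ C ∧ p.1 ∈ p.2}

/-- The partition intersection graph `pig C`: `(A, χ)` and `(A', χ')` are adjacent
iff they are distinct and `A ∩ A' ≠ ∅`. -/
def pig (C : Set (Set (Set X))) : SimpleGraph (PigV C) where
  Adj p q := p ≠ q ∧ (p.val.1 ∩ q.val.1).Nonempty
  symm := by
    constructor
    rintro p q ⟨h0, h⟩
    exact ⟨h0.symm, by rwa [Set.inter_comm]⟩
  loopless := ⟨fun p h => h.1 rfl⟩

/-- A triangulation `H` of `pig C` is proper if no fill edge joins a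
monochromatic pair (two vertices with the same character). -/
def IsProper (C : Set (Set (Set X))) (H : SimpleGraph (PigV C)) : Prop :=
  ∀ p q : PigV C, H.Adj p q → ¬(pig C).Adj p q → p.val.2 ≠ q.val.2

/-- The displayed characters of a triangulation `H` of `pig C`: the characters
of `C` broken by no fill edge of `H`. -/
def displayedChars (C : Set (Set (Set X))) (H : SimpleGraph (PigV C)) :
    Set (Set (Set X)) :=
  {χ | χ ∈ C ∧ ∀ p q : PigV C, H.Adj p q → ¬(pig C).Adj p q →
      ¬(p.val.2 = χ ∧ q.val.2 = χ)}

open Classical in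
/-- The fill weight `F_w` on `pig C` induced by a character weight `w`:
`w χ` on monochromatic pairs with shared character `χ`, and `0` otherwise. -/
noncomputable def wWeight (C : Set (Set (Set X))) (w : Set (Set X) → ℝ≥0) :
    Sym2 (PigV C) → ℝ≥0 :=
  Sym2.lift ⟨fun p q => if p.val.2 = q.val.2 then w p.val.2 else 0, by
    intro p q
    dsimp only
    by_cases h : p.val.2 = q.val.2
    · rw [if_pos h, if_pos h.symm, h]
    · rw [if_neg h, if_neg (fun h' => h h'.symm)]⟩

/-- The indicator fill weight `F_C` on `pig C`:
`1` on monochromatic pairs and `0` otherwise. -/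
noncomputable def indWeight (C : Set (Set (Set X))) : Sym2 (PigV C) → ℝ≥0 :=
  wWeight C fun _ => 1

/-- `w(C')`: total weight of a set of characters. -/
noncomputable def wsum (w : Set (Set X) → ℝ≥0) (C' : Set (Set (Set X))) : ℝ≥0 :=
  ∑ᶠ χ ∈ C', w χ

/-- An `X`-tree: a finite tree `T` together with `φ : X → V(T)` such that every
node of degree at most two is in the image of `φ`. -/
structure XTree (X : Type) where
  V : Type
  finV : Finite V
  T : SimpleGraph V
  isTree : T.IsTree
  φ : X → V
  lowDegreeLabeled : ∀ v : V, (T.neighborSet v).ncard ≤ 2 → v ∈ Set.range φ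

/-- The vertex set of the minimal subtree of `T` connecting `φ(A)`:
the union of the (unique) paths between labels of elements of `A`. -/
def subtreeVerts {W : Type} (T : SimpleGraph W) (φ : X → W) (A : Set X) : Set W :=
  {v | ∃ a ∈ A, ∃ b ∈ A, ∃ p : T.Path (φ a) (φ b), v ∈ p.val.support}

/-- `(T, φ)` displays the character `χ`: for distinct cells `A`, `A'` of `χ` the
subtrees `T(A)` and `T(A')` share no node. -/
def DisplaysIn {W : Type} (T : SimpleGraph W) (φ : X → W) (χ : Set (Set X)) : Prop :=
  ∀ A ∈ χ, ∀ A' ∈ χ, A ≠ A' → subtreeVerts T φ A ∩ subtreeVerts T φ A' = ∅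

/-- The `X`-tree `t` displays the character `χ`. -/
def Displays (t : XTree X) (χ : Set (Set X)) : Prop := DisplaysIn t.T t.φ χ

/-- `t` is a perfect phylogeny for `C`: it displays every character of `C`. -/
def IsPerfectPhylogeny (C : Set (Set (Set X))) (t : XTree X) : Prop :=
  ∀ χ ∈ C, Displays t χ

/-- `C` is compatible: some `X`-tree displays every character in `C`. -/
def Compatible (C : Set (Set (Set X))) : Prop := ∃ t : XTree X, IsPerfectPhylogeny C t

/-- Isomorphism of `X`-trees: a graph isomorphism carrying one labeling to the other. -/
def XTreeIso (t t' : XTree X) : Prop :=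
  ∃ ψ : t.T ≃g t'.T, ∀ x : X, ψ (t.φ x) = t'.φ x

/-- `t` is ternary: every internal node (degree at least two) has degree three. -/
def Ternary (t : XTree X) : Prop :=
  ∀ v : t.V, 2 ≤ (t.T.neighborSet v).ncard → (t.T.neighborSet v).ncard = 3

/-- The graph obtained from `T` by contracting the edge `uv` (merging `v` into `u`). -/
def contractGraph {W : Type} (T : SimpleGraph W) (u v : W) :
    SimpleGraph {x : W // x ≠ v} where
  Adj a b := a ≠ b ∧
    (T.Adj a.val b.val ∨ (a.val = u ∧ T.Adj v b.val) ∨ (b.val = u ∧ T.Adj a.val v))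
  symm := by
    constructor
    rintro a b ⟨h0, h⟩
    refine ⟨h0.symm, ?_⟩
    rcases h with h | ⟨h1, h2⟩ | ⟨h1, h2⟩
    · exact Or.inl h.symm
    · exact Or.inr (Or.inr ⟨h1, h2.symm⟩)
    · exact Or.inr (Or.inl ⟨h1, h2.symm⟩)
  loopless := ⟨fun a h => h.1 rfl⟩

open Classical in
/-- The labeling map after contracting the edge `uv` (merging `v` into `u`). -/
noncomputable def contractMap {W : Type} (φ : X → W) (u v : W) (huv : u ≠ v) :
    X → {x : W // x ≠ v} :=
  fun x => if h : φ x = v then ⟨u, huv⟩ else ⟨φ x, h⟩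

/-- The edge `uv` of the `X`-tree `t` is distinguished by `χ`: contracting `uv`
results in an `X`-tree that does not display `χ`. -/
def EdgeDistinguishedBy (t : XTree X) (u v : t.V) (h : t.T.Adj u v)
    (χ : Set (Set X)) : Prop :=
  ¬DisplaysIn (contractGraph t.T u v) (contractMap t.φ u v h.ne) χ

/-- `t` is distinguished by `C`: each edge of `t` is distinguished by some
character of `C`. -/
def DistinguishedBy (C : Set (Set (Set X))) (t : XTree X) : Prop :=
  ∀ u v : t.V, ∀ h : t.T.Adj u v, ∃ χ ∈ C, EdgeDistinguishedBy t u v h χ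

/-- `Δ_min^F(G)`: the minimal separators of `G` that are minimal separators of
some `F`-minimum minimal triangulation of `G`. -/
def minFillSeps (G : SimpleGraph V) (F : Sym2 V → ℝ≥0) : Set (Set V) :=
  {S | ∃ H : SimpleGraph V, IsFMinMinimalTriangulation G H F ∧ S ∈ minSeps H}

section Infra

variable {V : Type}

/-- One step of an `S`-avoiding walk. -/
def AStep (G : SimpleGraph V) (S : Set V) (a b : V) : Prop :=
  G.Adj a b ∧ a ∉ S ∧ b ∉ S

lemma AStep.symm' {G : SimpleGraph V} {S : Set V} : Symmetric (AStep G S) :=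
  fun _ _ h => ⟨h.1.symm, h.2.2, h.2.1⟩

lemma walk_avoid {G : SimpleGraph V} {S : Set V} :
    ∀ {x y : V} (p : G.Walk x y), (∀ v ∈ p.support, v ∉ S) →
      Relation.ReflTransGen (AStep G S) x y := by
  intro x y p
  induction p with
  | nil => intro _; exact .refl
  | @cons u v w h q ih =>
    intro hp
    refine .head ⟨h, hp _ (by simp), ?_⟩ (ih fun z hz => hp z (by simp [hz]))
    exact hp _ (by simp [SimpleGraph.Walk.start_mem_support q])

lemma avoidReach_iff {G : SimpleGraph V} {S : Set V} {x y : V} :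
    AvoidReach G S x y ↔ x ∉ S ∧ Relation.ReflTransGen (AStep G S) x y := by
  constructor
  · rintro ⟨p, hp⟩
    exact ⟨hp _ (SimpleGraph.Walk.start_mem_support _), walk_avoid p hp⟩
  · rintro ⟨hx, h⟩
    induction h with
    | refl => exact ⟨.nil, by intro v hv; simp at hv; subst hv; exact hx⟩
    | @tail b c hab hbc ih =>
      obtain ⟨p, hp⟩ := ih
      refine ⟨p.concat hbc.1, ?_⟩
      intro v hv
      rw [SimpleGraph.Walk.support_concat, List.mem_append] at hv
      rcases hv with hv | hv
      · exact hp v hv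
      · simp at hv; subst hv; exact hbc.2.2

lemma AvoidReach.notMem_left {G : SimpleGraph V} {S : Set V} {x y : V}
    (h : AvoidReach G S x y) : x ∉ S := (avoidReach_iff.1 h).1

lemma AvoidReach.notMem_right {G : SimpleGraph V} {S : Set V} {x y : V} :
    AvoidReach G S x y → y ∉ S := by
  rintro ⟨p, hp⟩; exact hp _ (SimpleGraph.Walk.end_mem_support _)

lemma avoidReach_refl {G : SimpleGraph V} {S : Set V} {x : V} (hx : x ∉ S) :
    AvoidReach G S x x := avoidReach_iff.2 ⟨hx, .refl⟩

lemma AvoidReach.symm {G : SimpleGraph V} {S : Set V} {x y : V}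
    (h : AvoidReach G S x y) : AvoidReach G S y x := by
  have hy := h.notMem_right
  rw [avoidReach_iff] at h ⊢
  exact ⟨hy, (@Relation.ReflTransGen.symmetric _ _ ⟨AStep.symm'⟩).symm _ _ h.2⟩

lemma AvoidReach.trans {G : SimpleGraph V} {S : Set V} {x y z : V}
    (h : AvoidReach G S x y) (h' : AvoidReach G S y z) : AvoidReach G S x z := by
  rw [avoidReach_iff] at h h' ⊢
  exact ⟨h.1, h.2.trans h'.2⟩

lemma avoidReach_of_adj {G : SimpleGraph V} {S : Set V} {x y : V}
    (h : G.Adj x y) (hx : x ∉ S) (hy : y ∉ S) : AvoidReach G S x y :=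
  avoidReach_iff.2 ⟨hx, .single ⟨h, hx, hy⟩⟩

lemma AvoidReach.mono {G H : SimpleGraph V} {S : Set V} {x y : V} (hGH : G ≤ H)
    (h : AvoidReach G S x y) : AvoidReach H S x y := by
  rw [avoidReach_iff] at h ⊢
  exact ⟨h.1, Relation.ReflTransGen.mono (fun a b hab => ⟨hGH hab.1, hab.2.1, hab.2.2⟩) _ _ h.2⟩

lemma AvoidReach.mono_set {G : SimpleGraph V} {S S' : Set V} {x y : V} (hS : S' ⊆ S)
    (h : AvoidReach G S x y) : AvoidReach G S' x y := by
  rw [avoidReach_iff] at h ⊢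
  exact ⟨fun hx => h.1 (hS hx), Relation.ReflTransGen.mono (fun a b hab =>
    ⟨hab.1, fun ha => hab.2.1 (hS ha), fun hb => hab.2.2 (hS hb)⟩) _ _ h.2⟩

/-- The connected component of `G - S` containing `x`. -/
def compOf (G : SimpleGraph V) (S : Set V) (x : V) : Set V := {y | AvoidReach G S x y}

lemma mem_compOf_self {G : SimpleGraph V} {S : Set V} {x : V} (hx : x ∉ S) :
    x ∈ compOf G S x := avoidReach_refl hx

lemma compOf_disjoint {G : SimpleGraph V} {S : Set V} {x : V} :
    Disjoint (compOf G S x) S :=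
  Set.disjoint_left.2 fun _ hy => AvoidReach.notMem_right hy

lemma isCompOf_compOf {G : SimpleGraph V} {S : Set V} {x : V} (hx : x ∉ S) :
    IsCompOf G S (compOf G S x) := by
  refine ⟨⟨x, mem_compOf_self hx⟩, compOf_disjoint,
    fun a ha b hb => (AvoidReach.symm ha).trans hb, ?_⟩
  intro C' hsub hdisj hconn
  refine Set.Subset.antisymm (fun v hv => ?_) hsub
  exact hconn x (hsub (mem_compOf_self hx)) v hv

lemma IsCompOf.not_mem {G : SimpleGraph V} {S C : Set V} (hC : IsCompOf G S C)
    {x : V} (hx : x ∈ C) : x ∉ S := fun hxS => (hC.2.1.le_bot ⟨hx, hxS⟩)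

lemma IsCompOf.eq_compOf {G : SimpleGraph V} {S C : Set V} (hC : IsCompOf G S C)
    {x : V} (hx : x ∈ C) : C = compOf G S x := by
  refine (hC.2.2.2 (compOf G S x) (fun a ha => hC.2.2.1 x hx a ha)
    compOf_disjoint (fun a ha b hb => (AvoidReach.symm ha).trans hb)).symm

lemma IsCompOf.mem_of_avoidReach {G : SimpleGraph V} {S C : Set V} (hC : IsCompOf G S C)
    {x y : V} (hx : x ∈ C) (h : AvoidReach G S x y) : y ∈ C := by
  rw [hC.eq_compOf hx]; exact h

lemma IsCompOf.adj_mem {G : SimpleGraph V} {S C : Set V} (hC : IsCompOf G S C)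
    {x y : V} (hx : x ∈ C) (hadj : G.Adj x y) (hy : y ∉ S) : y ∈ C :=
  hC.mem_of_avoidReach hx (avoidReach_of_adj hadj (hC.not_mem hx) hy)

lemma IsCompOf.eq_of_mem {G : SimpleGraph V} {S C C' : Set V} (hC : IsCompOf G S C)
    (hC' : IsCompOf G S C') {x : V} (hx : x ∈ C) (hx' : x ∈ C') : C = C' := by
  rw [hC.eq_compOf hx, hC'.eq_compOf hx']

lemma IsCompOf.neighbors_subset {G : SimpleGraph V} {S C : Set V}
    (hC : IsCompOf G S C) : neighborsOf G C ⊆ S := by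
  rintro v ⟨hvC, u, huC, hadj⟩
  by_contra hvS
  exact hvC (hC.adj_mem huC hadj hvS)

lemma IsSeparator.nonempty {G : SimpleGraph V} {S : Set V} {x y : V}
    (h : IsSeparator G S x y) : S.Nonempty := by
  obtain ⟨p⟩ := h.2.2.1
  by_contra hS
  rw [Set.not_nonempty_iff_eq_empty] at hS
  exact h.2.2.2 ⟨p, fun v _ => by rw [hS]; exact Set.notMem_empty v⟩

lemma exists_minimal_separator_aux {G : SimpleGraph V} {x y : V} [Finite V] :
    ∀ (n : ℕ) (S : Set V), S.ncard ≤ n → IsSeparator G S x y →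
      ∃ T, T ⊆ S ∧ IsSeparator G T x y ∧ ∀ T' ⊂ T, ¬IsSeparator G T' x y := by
  intro n
  induction n with
  | zero =>
    intro S hcard hsep
    refine ⟨S, subset_rfl, hsep, ?_⟩
    intro T' hT' _
    have : S = ∅ := by
      have := Set.ncard_eq_zero (Set.toFinite S) |>.1 (Nat.le_zero.1 hcard)
      exact this
    rw [this] at hT'
    obtain ⟨z, hz, -⟩ := Set.exists_of_ssubset hT'
    exact absurd hz (by simp)
  | succ n ih =>
    intro S hcard hsep
    by_cases h : ∀ T' ⊂ S, ¬IsSeparator G T' x y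
    · exact ⟨S, subset_rfl, hsep, h⟩
    · push_neg at h
      obtain ⟨S', hS', hsep'⟩ := h
      obtain ⟨T, hT1, hT2, hT3⟩ := ih S' (by
        have := Set.ncard_lt_ncard hS' (Set.toFinite S)
        omega) hsep'
      exact ⟨T, hT1.trans hS'.subset, hT2, hT3⟩

lemma exists_minimal_separator {G : SimpleGraph V} {S : Set V} {x y : V} [Finite V]
    (h : IsSeparator G S x y) :
    ∃ T, T ⊆ S ∧ IsSeparator G T x y ∧ ∀ T' ⊂ T, ¬IsSeparator G T' x y :=
  exists_minimal_separator_aux S.ncard S le_rfl h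

lemma reach_sdiff {G : SimpleGraph V} {S : Set V} {s x y : V}
    (h : Relation.ReflTransGen (AStep G (S \ {s})) x y) :
    x ∉ S → (AvoidReach G S x y ∨ ∃ u, AvoidReach G S x u ∧ G.Adj u s) := by
  induction h using Relation.ReflTransGen.head_induction_on with
  | refl => intro hy; exact Or.inl (avoidReach_refl hy)
  | @head a c hac hcy ih =>
    intro ha
    by_cases hc : c ∈ S
    · have hcs : c = s := by
        by_contra hne; exact hac.2.2 ⟨hc, hne⟩
      exact Or.inr ⟨a, avoidReach_refl ha, hcs ▸ hac.1⟩
    · rcases ih hc with h1 | ⟨u, h1, h2⟩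
      · exact Or.inl ((avoidReach_of_adj hac.1 ha hc).trans h1)
      · exact Or.inr ⟨u, (avoidReach_of_adj hac.1 ha hc).trans h1, h2⟩

lemma full_of_minimal {G : SimpleGraph V} {S : Set V} {x y : V}
    (hsep : IsSeparator G S x y) (hmin : ∀ S' ⊂ S, ¬IsSeparator G S' x y) :
    ∀ s ∈ S, s ∈ neighborsOf G (compOf G S x) ∧ s ∈ neighborsOf G (compOf G S y) := by
  intro s hs
  have hxS := hsep.1
  have hyS := hsep.2.1
  have hsub : S \ {s} ⊂ S := by
    constructor
    · exact Set.diff_subset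
    · intro hsub'
      exact (hsub' hs).2 rfl
  have hnsep : ¬IsSeparator G (S \ {s}) x y := hmin _ hsub
  have hav : AvoidReach G (S \ {s}) x y := by
    by_contra h
    exact hnsep ⟨fun hx' => hxS hx'.1, fun hy' => hyS hy'.1, hsep.2.2.1, h⟩
  constructor
  · rcases reach_sdiff (avoidReach_iff.1 hav).2 hxS with h1 | ⟨u, h1, h2⟩
    · exact absurd h1 hsep.2.2.2
    · exact ⟨fun hmem => AvoidReach.notMem_right hmem hs, u, h1, h2⟩
  · rcases reach_sdiff (avoidReach_iff.1 hav.symm).2 hyS with h1 | ⟨u, h1, h2⟩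
    · exact absurd h1.symm hsep.2.2.2
    · exact ⟨fun hmem => AvoidReach.notMem_right hmem hs, u, h1, h2⟩

lemma full_compOf_of_minimal {G : SimpleGraph V} {S : Set V} {x y : V}
    (hsep : IsSeparator G S x y) (hmin : ∀ S' ⊂ S, ¬IsSeparator G S' x y) :
    neighborsOf G (compOf G S x) = S ∧ neighborsOf G (compOf G S y) = S := by
  constructor
  · exact Set.Subset.antisymm ((isCompOf_compOf hsep.1).neighbors_subset)
      (fun s hs => (full_of_minimal hsep hmin s hs).1)
  · exact Set.Subset.antisymm ((isCompOf_compOf hsep.2.1).neighbors_subset)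
      (fun s hs => (full_of_minimal hsep hmin s hs).2)

lemma minimal_of_full {G : SimpleGraph V} {S : Set V} {x y : V}
    (hsep : IsSeparator G S x y)
    (hx : neighborsOf G (compOf G S x) = S) (hy : neighborsOf G (compOf G S y) = S) :
    ∀ S' ⊂ S, ¬IsSeparator G S' x y := by
  intro S' hS' hsep'
  obtain ⟨s, hsS, hsS'⟩ := Set.exists_of_ssubset hS'
  have h1 : s ∈ neighborsOf G (compOf G S x) := by rw [hx]; exact hsS
  have h2 : s ∈ neighborsOf G (compOf G S y) := by rw [hy]; exact hsS
  obtain ⟨-, u, hu, hus⟩ := h1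
  obtain ⟨-, v, hv, hvs⟩ := h2
  have huS : u ∉ S := AvoidReach.notMem_right hu
  have hvS : v ∉ S := AvoidReach.notMem_right hv
  have hsub := hS'.subset
  have hreach : AvoidReach G S' x y :=
    (((hu.mono_set hsub).trans
      (avoidReach_of_adj hus (fun h => huS (hsub h)) hsS')).trans
      (avoidReach_of_adj hvs.symm hsS' (fun h => hvS (hsub h)))).trans
      (hv.symm.mono_set hsub)
  exact hsep'.2.2.2 hreach

/-- Characterization: `S` is a minimal `xy`-separator iff it is an `xy`-separator
with both endpoint components full. -/
lemma isMinSepFor_iff {G : SimpleGraph V} {S : Set V} {x y : V} :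
    (IsSeparator G S x y ∧ ∀ S' ⊂ S, ¬IsSeparator G S' x y) ↔
      (IsSeparator G S x y ∧ neighborsOf G (compOf G S x) = S ∧
        neighborsOf G (compOf G S y) = S) := by
  constructor
  · rintro ⟨hsep, hmin⟩
    exact ⟨hsep, full_compOf_of_minimal hsep hmin⟩
  · rintro ⟨hsep, hx, hy⟩
    exact ⟨hsep, minimal_of_full hsep hx hy⟩

lemma subsingleton_comps_of_clique {H : SimpleGraph V} {S K : Set V}
    (hK : H.IsClique K) :
    {C : Set V | IsCompOf H S C ∧ (C ∩ K).Nonempty}.Subsingleton := by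
  rintro C ⟨hC, t, htC, htK⟩ C' ⟨hC', t', htC', htK'⟩
  by_cases het : t = t'
  · exact hC.eq_of_mem hC' htC (het ▸ htC')
  · have hadj : H.Adj t t' := hK htK htK' het
    have ht'C : t' ∈ C := hC.adj_mem htC hadj (hC'.not_mem htC')
    exact hC.eq_of_mem hC' ht'C htC'

end Infra

section Cycles

variable {V : Type}

lemma zmod_cast_inj {n a b : ℕ} (ha : a < n) (hb : b < n)
    (h : (a : ZMod n) = (b : ZMod n)) : a = b := by
  have := congrArg ZMod.val h
  rwa [ZMod.val_cast_of_lt ha, ZMod.val_cast_of_lt hb] at this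

lemma zmod_val_add_one {n : ℕ} (hn : 1 < n) (i : ZMod n) :
    haveI : NeZero n := ⟨by omega⟩
    (i + 1).val = (i.val + 1) % n := by
  haveI : NeZero n := ⟨by omega⟩
  haveI : Fact (1 < n) := ⟨hn⟩
  rw [ZMod.val_add, ZMod.val_one]

/-- Translate chordality to cyclically-arranged lists. -/
lemma chordOfList {G : SimpleGraph V} (hch : IsChordal G) (l : List V)
    (h4 : 4 ≤ l.length) (nd : l.Nodup) (hchain : l.Chain' G.Adj)
    (hne : l ≠ []) (hwrap : G.Adj (l.getLast hne) (l.head hne)) :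
    ∃ p q : ℕ, ∃ hp : p < l.length, ∃ hq : q < l.length,
      q ≠ (p + 1) % l.length ∧ p ≠ (q + 1) % l.length ∧
        G.Adj (l.get ⟨p, hp⟩) (l.get ⟨q, hq⟩) := by
  set n := l.length with hn
  haveI : NeZero n := ⟨by omega⟩
  set f : ZMod n → V := fun i => l.get ⟨i.val, ZMod.val_lt i⟩ with hf
  have hinj : Function.Injective f := by
    intro i j hij
    have := List.nodup_iff_injective_get.1 nd hij
    exact ZMod.val_injective n (congrArg Fin.val this)
  have hgetlast : l.getLast hne = l.get ⟨n - 1, by omega⟩ := List.getLast_eq_getElem hne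
  have hhead : l.head hne = l.get ⟨0, by omega⟩ := by
    cases l with
    | nil => exact absurd rfl hne
    | cons a t => rfl
  have hadj : ∀ i, G.Adj (f i) (f (i + 1)) := by
    intro i
    have hval : (i + 1).val = (i.val + 1) % n := zmod_val_add_one (by omega) i
    by_cases hlt : i.val + 1 < n
    · have h1 : (i + 1).val = i.val + 1 := by rw [hval, Nat.mod_eq_of_lt hlt]
      have hc := List.isChain_iff_getElem.1 hchain i.val (by omega)
      simp only [hf]
      simp only [List.get_eq_getElem, h1]
      exact hc
    · have hi : i.val = n - 1 := by have := ZMod.val_lt i; omega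
      have h1 : (i + 1).val = 0 := by
        rw [hval, hi, Nat.sub_add_cancel (by omega : 1 ≤ n), Nat.mod_self]
      simp only [hf]
      rw [hgetlast, hhead] at hwrap
      convert hwrap using 2
      · exact Fin.ext hi
      · exact Fin.ext h1
  obtain ⟨i, j, hne1, hne2, hadj'⟩ := hch n h4 f hinj hadj
  refine ⟨i.val, j.val, ZMod.val_lt i, ZMod.val_lt j, ?_, ?_, hadj'⟩
  · intro hq
    exact hne1 (ZMod.val_injective n (by rw [zmod_val_add_one (by omega : 1 < n) i]; exact hq))
  · intro hp
    exact hne2 (ZMod.val_injective n (by rw [zmod_val_add_one (by omega : 1 < n) j]; exact hp))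

lemma core_arc {V : Type} {H'' : SimpleGraph V} {S B : Set V} {n : ℕ} (hn : 4 ≤ n)
    [NeZero n] (f : ZMod n → V) (hinj : Function.Injective f)
    (hadj : ∀ i, H''.Adj (f i) (f (i + 1)))
    (hexit : ∀ a b, H''.Adj a b → a ∈ B → b ∉ B → b ∈ S)
    (i j : ZMod n) (hne1 : j ≠ i + 1) (hne2 : i ≠ j + 1) (hij : i ≠ j)
    (hBi : f i ∈ B) (hBj : f j ∉ B)
    (hfull : ∀ a' ∈ B, ¬H''.Adj a' (f j)) :
    ∃ k k' : ZMod n, k' ≠ k + 1 ∧ k ≠ k' + 1 ∧ k ≠ k' ∧ f k ∈ S ∧ f k' ∈ S := by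
  classical
  have hcast : ((j - i).val : ZMod n) = j - i := ZMod.natCast_rightInverse _
  have hcast' : ((i - j).val : ZMod n) = i - j := ZMod.natCast_rightInverse _
  set d : ℕ := (j - i).val with hd
  set d' : ℕ := (i - j).val with hd'
  have hdlt : d < n := ZMod.val_lt _
  have hdlt' : d' < n := ZMod.val_lt _
  have hdne : d ≠ 0 := by
    intro h0
    apply hij
    have h : j - i = 0 := by rw [← hcast, h0]; simp
    exact (sub_eq_zero.1 h).symm
  have hd1 : d ≠ 1 := by
    intro h1
    apply hne1
    have h : j - i = 1 := by rw [← hcast, h1]; simp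
    rw [sub_eq_iff_eq_add.1 h, add_comm]
  have hdne' : d' ≠ 0 := by
    intro h0
    apply hij
    have h : i - j = 0 := by rw [← hcast', h0]; simp
    exact sub_eq_zero.1 h
  have hd1' : d' ≠ 1 := by
    intro h1
    apply hne2
    have h : i - j = 1 := by rw [← hcast', h1]; simp
    rw [sub_eq_iff_eq_add.1 h, add_comm]
  have hsum : d + d' = n := by
    have hne0 : (j - i) ≠ 0 := fun h => hij (sub_eq_zero.1 h).symm
    have : i - j = -(j - i) := by ring
    rw [hd', this, ZMod.neg_val, if_neg hne0, hd]
    omega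
  -- forward walk from i towards j
  have hPd : f (i + (d : ZMod n)) ∉ B := by rw [hcast, add_sub_cancel]; exact hBj
  have hex : ∃ t : ℕ, f (i + (t : ZMod n)) ∉ B := ⟨d, hPd⟩
  set t₀ := Nat.find hex with ht₀
  have hspec : f (i + (t₀ : ZMod n)) ∉ B := Nat.find_spec hex
  have ht₀d : t₀ ≤ d := Nat.find_le hPd
  have ht₀0 : t₀ ≠ 0 := by
    intro h0
    apply hspec
    rw [h0]
    simpa using hBi
  have hprev : f (i + ((t₀ - 1 : ℕ) : ZMod n)) ∈ B := by
    by_contra h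
    exact Nat.find_min hex (by omega : t₀ - 1 < t₀) h
  have hstep : H''.Adj (f (i + ((t₀ - 1 : ℕ) : ZMod n))) (f (i + (t₀ : ZMod n))) := by
    have := hadj (i + ((t₀ - 1 : ℕ) : ZMod n))
    have harith : i + ((t₀ - 1 : ℕ) : ZMod n) + 1 = i + (t₀ : ZMod n) := by
      have h2 : ((t₀ - 1 : ℕ) : ZMod n) + 1 = ((t₀ - 1 + 1 : ℕ) : ZMod n) := by
        push_cast; ring
      rw [add_assoc, h2, show t₀ - 1 + 1 = t₀ by omega]
    rwa [harith] at this
  have hkS : f (i + (t₀ : ZMod n)) ∈ S := hexit _ _ hstep hprev hspec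
  have ht₀d' : t₀ ≠ d := by
    intro h
    apply hfull _ hprev
    have : i + (t₀ : ZMod n) = j := by rw [h, hcast, add_sub_cancel]
    rwa [this] at hstep
  -- backward walk from i towards j
  have hQd : f (i - (d' : ZMod n)) ∉ B := by rw [hcast', sub_sub_cancel]; exact hBj
  have hex' : ∃ t : ℕ, f (i - (t : ZMod n)) ∉ B := ⟨d', hQd⟩
  set t₁ := Nat.find hex' with ht₁
  have hspec' : f (i - (t₁ : ZMod n)) ∉ B := Nat.find_spec hex'
  have ht₁d : t₁ ≤ d' := Nat.find_le hQd
  have ht₁0 : t₁ ≠ 0 := by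
    intro h0
    apply hspec'
    rw [h0]
    simpa using hBi
  have hprev' : f (i - ((t₁ - 1 : ℕ) : ZMod n)) ∈ B := by
    by_contra h
    exact Nat.find_min hex' (by omega : t₁ - 1 < t₁) h
  have hstep' : H''.Adj (f (i - ((t₁ - 1 : ℕ) : ZMod n))) (f (i - (t₁ : ZMod n))) := by
    have := hadj (i - (t₁ : ZMod n))
    have harith : i - (t₁ : ZMod n) + 1 = i - ((t₁ - 1 : ℕ) : ZMod n) := by
      have h2 : ((t₁ - 1 : ℕ) : ZMod n) + 1 = ((t₁ - 1 + 1 : ℕ) : ZMod n) := by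
        push_cast; ring
      have h3 : (t₁ : ZMod n) = ((t₁ - 1 : ℕ) : ZMod n) + 1 := by
        rw [h2, show t₁ - 1 + 1 = t₁ by omega]
      rw [h3]
      ring
    rw [harith] at this
    exact this.symm
  have hkS' : f (i - (t₁ : ZMod n)) ∈ S := hexit _ _ hstep' hprev' hspec'
  have ht₁d' : t₁ ≠ d' := by
    intro h
    apply hfull _ hprev'
    have : i - (t₁ : ZMod n) = j := by rw [h, hcast', sub_sub_cancel]
    rwa [this] at hstep'
  -- assemble
  refine ⟨i + (t₀ : ZMod n), i - (t₁ : ZMod n), ?_, ?_, ?_, hkS, hkS'⟩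
  · intro h
    have hc : ((n - (t₀ + t₁) : ℕ) : ZMod n) = ((1 : ℕ) : ZMod n) := by
      push_cast [Nat.cast_sub (by omega : t₀ + t₁ ≤ n)]
      rw [ZMod.natCast_self]
      linear_combination h
    have := zmod_cast_inj (by omega) (by omega) hc
    omega
  · intro h
    have hc : ((t₀ + t₁ : ℕ) : ZMod n) = ((1 : ℕ) : ZMod n) := by
      push_cast
      linear_combination h
    have := zmod_cast_inj (by omega) (by omega) hc
    omega
  · intro h
    have hc : ((t₀ + t₁ : ℕ) : ZMod n) = ((0 : ℕ) : ZMod n) := by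
      push_cast
      linear_combination h
    have := zmod_cast_inj (by omega) (by omega) hc
    omega

lemma core_chordal {V : Type} {G H'' : SimpleGraph V} {S B : Set V}
    (hch : IsChordal G) (hle : H'' ≤ G) (hclique : G.IsClique S)
    (hBS : ∀ b ∈ B, b ∉ S)
    (hrem : ∀ a b, G.Adj a b → ¬H''.Adj a b →
      ((a ∈ B ∧ b ∉ B ∧ ∀ a' ∈ B, ¬H''.Adj a' b) ∨
        (b ∈ B ∧ a ∉ B ∧ ∀ b' ∈ B, ¬H''.Adj b' a)))
    (hexit : ∀ a b, H''.Adj a b → a ∈ B → b ∉ B → b ∈ S) :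
    IsChordal H'' := by
  intro n hn f hinj hadj
  haveI : NeZero n := ⟨by omega⟩
  obtain ⟨i, j, hne1, hne2, hGadj⟩ := hch n hn f hinj (fun k => hle (hadj k))
  by_cases hH : H''.Adj (f i) (f j)
  · exact ⟨i, j, hne1, hne2, hH⟩
  have hij : i ≠ j := fun h => G.loopless.irrefl _ (h ▸ hGadj)
  have key : ∃ k k' : ZMod n, k' ≠ k + 1 ∧ k ≠ k' + 1 ∧ k ≠ k' ∧ f k ∈ S ∧ f k' ∈ S := by
    rcases hrem _ _ hGadj hH with ⟨hB1, hB2, hfull⟩ | ⟨hB1, hB2, hfull⟩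
    · exact core_arc hn f hinj hadj hexit i j hne1 hne2 hij hB1 hB2 hfull
    · exact core_arc hn f hinj hadj hexit j i hne2 hne1 (Ne.symm hij) hB1 hB2 hfull
  obtain ⟨k, k', hk1, hk2, hkk, hS1, hS2⟩ := key
  have hGadj' : G.Adj (f k) (f k') := hclique hS1 hS2 (fun h => hkk (hinj h))
  have hH' : H''.Adj (f k) (f k') := by
    by_contra h
    rcases hrem _ _ hGadj' h with ⟨hB1, -, -⟩ | ⟨hB1, -, -⟩
    · exact hBS _ hB1 hS1
    · exact hBS _ hB1 hS2
  exact ⟨k, k', hk1, hk2, hH'⟩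

end Cycles

section DiracEasy

variable {V : Type}

lemma zmod_cast_ne {n a b : ℕ} (ha : a < n) (hb : b < n) (hab : a ≠ b) :
    (a : ZMod n) ≠ (b : ZMod n) := fun h => hab (zmod_cast_inj ha hb h)

lemma walkAlong {H : SimpleGraph V} {T : Set V} {n : ℕ} [NeZero n] (f : ZMod n → V)
    (hadj : ∀ i, H.Adj (f i) (f (i + 1))) (a : ZMod n) :
    ∀ t : ℕ, (∀ s : ℕ, s ≤ t → f (a + (s : ZMod n)) ∉ T) →
      AvoidReach H T (f a) (f (a + (t : ZMod n))) := by
  intro t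
  induction t with
  | zero =>
    intro h
    have h0 := h 0 le_rfl
    simp only [Nat.cast_zero, add_zero] at h0 ⊢
    exact avoidReach_refl h0
  | succ t ih =>
    intro h
    have h1 := ih (fun s hs => h s (by omega))
    have hadj' := hadj (a + (t : ZMod n))
    have harith : a + (t : ZMod n) + 1 = a + ((t + 1 : ℕ) : ZMod n) := by
      push_cast; ring
    rw [harith] at hadj'
    exact h1.trans (avoidReach_of_adj hadj' (h t (by omega)) (h (t + 1) le_rfl))

lemma chordal_of_cliques {H : SimpleGraph V} [Finite V]
    (h : ∀ S : Set V, IsMinSeparator H S → H.IsClique S) : IsChordal H := by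
  intro n hn f hinj hadj
  haveI : NeZero n := ⟨by omega⟩
  by_contra hno
  push_neg at hno
  set x := f ((0 : ℕ) : ZMod n) with hx
  set y := f ((2 : ℕ) : ZMod n) with hy
  have hxyne : x ≠ y := fun h' => by
    have := hinj h'
    exact absurd (zmod_cast_inj (by omega) (by omega) this) (by omega)
  have hAdj01 : H.Adj x (f ((1 : ℕ) : ZMod n)) := by
    have := hadj ((0 : ℕ) : ZMod n)
    have harith : ((0 : ℕ) : ZMod n) + 1 = ((1 : ℕ) : ZMod n) := by push_cast; ring
    rwa [harith] at this
  have hAdj12 : H.Adj (f ((1 : ℕ) : ZMod n)) y := by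
    have := hadj ((1 : ℕ) : ZMod n)
    have harith : ((1 : ℕ) : ZMod n) + 1 = ((2 : ℕ) : ZMod n) := by push_cast; ring
    rwa [harith] at this
  have hreach : H.Reachable x y := hAdj01.reachable.trans hAdj12.reachable
  have hnxy : ¬H.Adj x y := by
    have h1 : ((2 : ℕ) : ZMod n) ≠ ((0 : ℕ) : ZMod n) + 1 := by
      have harith : ((0 : ℕ) : ZMod n) + 1 = ((1 : ℕ) : ZMod n) := by push_cast; ring
      rw [harith]
      exact zmod_cast_ne (by omega) (by omega) (by omega)
    have h2 : ((0 : ℕ) : ZMod n) ≠ ((2 : ℕ) : ZMod n) + 1 := by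
      have harith : ((2 : ℕ) : ZMod n) + 1 = ((3 : ℕ) : ZMod n) := by push_cast; ring
      rw [harith]
      exact zmod_cast_ne (by omega) (by omega) (by omega)
    exact hno _ _ h1 h2
  have hsep : IsSeparator H (Set.univ \ {x, y}) x y := by
    refine ⟨by simp, by simp, hreach, ?_⟩
    intro hav
    rw [avoidReach_iff] at hav
    rcases hav.2.cases_head with heq | ⟨c, hstep, -⟩
    · exact hxyne heq
    · have hc : c ∈ ({x, y} : Set V) := by
        by_contra hc
        exact hstep.2.2 ⟨trivial, hc⟩
      rcases hc with hc | hc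
      · exact H.loopless.irrefl x (hc ▸ hstep.1)
      · exact hnxy (hc ▸ hstep.1)
  obtain ⟨T, hTsub, hTsep, hTmin⟩ := exists_minimal_separator hsep
  have hclT : H.IsClique T := h T ⟨x, y, hTsep, hTmin⟩
  have h1T : f ((1 : ℕ) : ZMod n) ∈ T := by
    by_contra h1
    exact hTsep.2.2.2 ((avoidReach_of_adj hAdj01 hTsep.1 h1).trans
      (avoidReach_of_adj hAdj12 h1 hTsep.2.1))
  have hk : ∃ k : ℕ, 3 ≤ k ∧ k ≤ n - 1 ∧ f ((k : ℕ) : ZMod n) ∈ T := by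
    by_contra hk
    push_neg at hk
    have hwalk : AvoidReach H T y (f (((2 : ℕ) : ZMod n) + ((n - 2 : ℕ) : ZMod n))) := by
      apply walkAlong f hadj
      intro s hs
      have harith : ((2 : ℕ) : ZMod n) + ((s : ℕ) : ZMod n) = ((2 + s : ℕ) : ZMod n) := by
        push_cast; ring
      rw [harith]
      rcases Nat.lt_or_ge s 1 with hs0 | hs1
      · interval_cases s
        exact hTsep.2.1
      · rcases Nat.lt_or_ge (2 + s) n with hlt | hge
        · exact hk (2 + s) (by omega) (by omega)
        · have h2n : 2 + s = n := by omega
          have : ((2 + s : ℕ) : ZMod n) = ((0 : ℕ) : ZMod n) := by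
            rw [h2n]; simp
          rw [this]
          exact hTsep.1
    have harith : ((2 : ℕ) : ZMod n) + ((n - 2 : ℕ) : ZMod n) = ((0 : ℕ) : ZMod n) := by
      rw [show ((2:ℕ) : ZMod n) + ((n-2:ℕ) : ZMod n) = ((2 + (n-2) : ℕ) : ZMod n) by push_cast; ring,
        show 2 + (n - 2) = n by omega]
      simp
    rw [harith] at hwalk
    exact hTsep.2.2.2 hwalk.symm
  obtain ⟨k, hk3, hkn, hkT⟩ := hk
  have hne : f ((1 : ℕ) : ZMod n) ≠ f ((k : ℕ) : ZMod n) := by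
    intro h'
    exact absurd (zmod_cast_inj (by omega) (by omega) (hinj h')) (by omega)
  have hadjk : H.Adj (f ((1 : ℕ) : ZMod n)) (f ((k : ℕ) : ZMod n)) := hclT h1T hkT hne
  have hc1 : ((k : ℕ) : ZMod n) ≠ ((1 : ℕ) : ZMod n) + 1 := by
    rw [show ((1:ℕ) : ZMod n) + 1 = ((2:ℕ) : ZMod n) by push_cast; ring]
    exact zmod_cast_ne (by omega) (by omega) (by omega)
  have hc2 : ((1 : ℕ) : ZMod n) ≠ ((k : ℕ) : ZMod n) + 1 := by
    rw [show ((k:ℕ) : ZMod n) + 1 = ((k+1:ℕ) : ZMod n) by push_cast; ring]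
    rcases Nat.lt_or_ge (k + 1) n with hlt | hge
    · exact zmod_cast_ne (by omega) (by omega) (by omega)
    · have : k + 1 = n := by omega
      rw [this, show ((n:ℕ) : ZMod n) = ((0:ℕ) : ZMod n) by simp]
      exact zmod_cast_ne (by omega) (by omega) (by omega)
  exact hno _ _ hc1 hc2 hadjk

end DiracEasy

section GoodLists

variable {V : Type}

/-- A walk-list from `a` to `b` whose members are `a`, `b`, or elements of `A`. -/
def GoodList (G : SimpleGraph V) (A : Set V) (a b : V) (L : List V) : Prop :=
  2 ≤ L.length ∧ L.Chain' G.Adj ∧ L.head? = some a ∧ L.getLast? = some b ∧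
    ∀ v ∈ L, v = a ∨ v = b ∨ v ∈ A

lemma GoodList.getElem_zero {G : SimpleGraph V} {A : Set V} {a b : V} {L : List V}
    (h : GoodList G A a b L) (h0 : 0 < L.length) : L[0] = a := by
  have := h.2.2.1
  rw [List.head?_eq_getElem?, List.getElem?_eq_getElem h0] at this
  exact Option.some_inj.1 this

lemma GoodList.getElem_last {G : SimpleGraph V} {A : Set V} {a b : V} {L : List V}
    (h : GoodList G A a b L) (h0 : L.length - 1 < L.length) : L[L.length - 1] = b := by
  have := h.2.2.2.1
  rw [List.getLast?_eq_getElem?, List.getElem?_eq_getElem h0] at this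
  exact Option.some_inj.1 this

lemma take_head? {L : List V} {p : ℕ} (hp : 0 < p) (h0 : 0 < L.length) :
    (L.take p).head? = L.head? := by
  rw [List.head?_eq_getElem?, List.head?_eq_getElem?, List.getElem?_take, if_pos hp]

lemma take_getLast? {L : List V} {p : ℕ} (hp : p + 1 ≤ L.length) :
    (L.take (p + 1)).getLast? = some L[p] := by
  rw [List.getLast?_eq_getElem?, List.length_take]
  have hmin : (p + 1) ⊓ L.length = p + 1 := by omega
  rw [hmin]
  simp only [Nat.add_sub_cancel]
  rw [List.getElem?_take, if_pos (by omega)]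
  exact List.getElem?_eq_getElem (by omega)

lemma drop_getLast? {L : List V} {q : ℕ} (hq : q < L.length) :
    (L.drop q).getLast? = L.getLast? := by
  rw [List.getLast?_eq_getElem?, List.getLast?_eq_getElem?, List.getElem?_drop,
    List.length_drop]
  congr 1
  omega

lemma cut_chord {G : SimpleGraph V} {A : Set V} {a b : V} {L : List V}
    (h : GoodList G A a b L) {p q : ℕ} (hpq : p + 2 ≤ q) (hq : q < L.length)
    (hadj : G.Adj L[p] L[q]) :
    ∃ L', GoodList G A a b L' ∧ L'.length < L.length := by
  refine ⟨L.take (p + 1) ++ L.drop q, ⟨?_, ?_, ?_, ?_, ?_⟩, ?_⟩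
  · rw [List.length_append, List.length_take, List.length_drop]; omega
  · show List.IsChain _ _
    rw [List.isChain_append]
    refine ⟨h.2.1.take _, h.2.1.drop _, ?_⟩
    intro u hu v hv
    rw [take_getLast? (by omega)] at hu
    rw [List.head?_drop, List.getElem?_eq_getElem hq] at hv
    simp only [Option.mem_def, Option.some_inj] at hu hv
    rw [← hu, ← hv]
    exact hadj
  · rw [List.head?_append, take_head? (by omega) (by omega), h.2.2.1, Option.some_or]
  · rw [List.getLast?_append, drop_getLast? hq, h.2.2.2.1, Option.some_or]
  · intro v hv
    rcases List.mem_append.1 hv with hv | hv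
    · exact h.2.2.2.2 v ((List.take_sublist _ _).subset hv)
    · exact h.2.2.2.2 v ((List.drop_sublist _ _).subset hv)
  · rw [List.length_append, List.length_take, List.length_drop]
    omega

lemma cut_dup {G : SimpleGraph V} {A : Set V} {a b : V} {L : List V}
    (h : GoodList G A a b L) (hab : a ≠ b) {p q : ℕ} (hpq : p < q) (hq : q < L.length)
    (heq : L[p] = L[q]) :
    ∃ L', GoodList G A a b L' ∧ L'.length < L.length := by
  by_cases hql : q = L.length - 1
  · have hqb : L[q] = b := by
      subst hql; exact h.getElem_last (by omega)
    have hp0 : p ≠ 0 := by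
      intro h0
      apply hab
      subst h0
      rw [← h.getElem_zero (by omega), heq, hqb]
    refine ⟨L.take (p + 1), ⟨?_, h.2.1.take _, ?_, ?_, ?_⟩, ?_⟩
    · rw [List.length_take]; omega
    · rw [take_head? (by omega) (by omega)]; exact h.2.2.1
    · rw [take_getLast? (by omega), heq, hqb]
    · intro v hv; exact h.2.2.2.2 v ((List.take_sublist _ _).subset hv)
    · rw [List.length_take]; omega
  · have hq1 : q + 1 < L.length := by omega
    refine ⟨L.take (p + 1) ++ L.drop (q + 1), ⟨?_, ?_, ?_, ?_, ?_⟩, ?_⟩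
    · rw [List.length_append, List.length_take, List.length_drop]; omega
    · show List.IsChain _ _
      rw [List.isChain_append]
      refine ⟨h.2.1.take _, h.2.1.drop _, ?_⟩
      intro u hu v hv
      rw [take_getLast? (by omega)] at hu
      rw [List.head?_drop, List.getElem?_eq_getElem hq1] at hv
      simp only [Option.mem_def, Option.some_inj] at hu hv
      rw [← hu, ← hv, heq]
      have := List.isChain_iff_getElem.1 h.2.1 q (by omega)
      simpa using this
    · rw [List.head?_append, take_head? (by omega) (by omega), h.2.2.1, Option.some_or]
    · rw [List.getLast?_append, drop_getLast? hq1, h.2.2.2.1, Option.some_or]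
    · intro v hv
      rcases List.mem_append.1 hv with hv | hv
      · exact h.2.2.2.2 v ((List.take_sublist _ _).subset hv)
      · exact h.2.2.2.2 v ((List.drop_sublist _ _).subset hv)
    · rw [List.length_append, List.length_take, List.length_drop]
      omega

lemma exists_induced_goodList {G : SimpleGraph V} {A : Set V} {a b : V}
    (hab : a ≠ b) (hex : ∃ L, GoodList G A a b L) :
    ∃ L, GoodList G A a b L ∧ L.Nodup ∧
      ∀ p q : ℕ, p + 2 ≤ q → ∀ (hq : q < L.length) (hp : p < L.length),
        ¬G.Adj (L[p]'hp) (L[q]'hq) := by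
  classical
  have hexm : ∃ m, ∃ L, GoodList G A a b L ∧ L.length = m := by
    obtain ⟨L, hL⟩ := hex
    exact ⟨L.length, L, hL, rfl⟩
  obtain ⟨L, hL, hlen⟩ := Nat.find_spec hexm
  have hmin : ∀ L', GoodList G A a b L' → L.length ≤ L'.length := by
    intro L' hL'
    rw [hlen]
    exact Nat.find_le ⟨L', hL', rfl⟩
  have hnd : L.Nodup := by
    by_contra hnd
    rw [List.nodup_iff_injective_get] at hnd
    obtain ⟨⟨i, hi⟩, ⟨j, hj⟩, hij, hne⟩ := Function.not_injective_iff.1 hnd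
    simp only [List.get_eq_getElem] at hij
    have hne' : i ≠ j := fun h => hne (Fin.ext h)
    rcases Nat.lt_or_ge i j with hlt | hge
    · obtain ⟨L', hL', hlt'⟩ := cut_dup hL hab hlt hj hij
      exact absurd (hmin L' hL') (by omega)
    · obtain ⟨L', hL', hlt'⟩ := cut_dup hL hab (by omega : j < i) hi hij.symm
      exact absurd (hmin L' hL') (by omega)
  refine ⟨L, hL, hnd, ?_⟩
  intro p q hpq hq hp hadj
  obtain ⟨L', hL', hlt'⟩ := cut_chord hL hpq hq hadj
  exact absurd (hmin L' hL') (by omega)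

lemma exists_goodList_of_comp {G : SimpleGraph V} {S C : Set V}
    (hC : IsCompOf G S C) {u v : V} (hu : u ∈ C) (hv : v ∈ C) :
    ∃ M : List V, M.Chain' G.Adj ∧ M.head? = some u ∧ M.getLast? = some v ∧
      ∀ w ∈ M, w ∈ C := by
  have hreach := hC.2.2.1 u hu v hv
  rw [avoidReach_iff] at hreach
  obtain ⟨-, hrt⟩ := hreach
  clear hv
  induction hrt with
  | refl => exact ⟨[u], by simp [List.Chain'], by simp, by simp, by simpa using hu⟩
  | @tail c d hcd hstep ih =>
    obtain ⟨M, hchain, hhead, hlast, hmem⟩ := ih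
    have hMne : M ≠ [] := by
      intro h; rw [h] at hhead; simp at hhead
    have hdC : d ∈ C := by
      have hcC : c ∈ C := by
        have := hlast
        rw [List.getLast?_eq_getElem?, List.getElem?_eq_getElem
          (by cases M with | nil => exact absurd rfl hMne | cons x t => simp : M.length - 1 < M.length)] at this
        exact (Option.some_inj.1 this) ▸ hmem _ (List.getElem_mem _)
      exact hC.adj_mem hcC hstep.1 hstep.2.2
    refine ⟨M ++ [d], ?_, ?_, by simp, ?_⟩
    · show List.IsChain _ _
      rw [List.isChain_append]
      refine ⟨hchain, by simp, ?_⟩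
      intro x hx y hy
      rw [hlast] at hx
      simp only [Option.mem_def, Option.some_inj, List.head?_cons] at hx hy
      rw [← hx, ← hy]
      exact hstep.1
    · rw [List.head?_append, hhead, Option.some_or]
    · intro w hw
      rcases List.mem_append.1 hw with hw | hw
      · exact hmem w hw
      · simp at hw; rw [hw]; exact hdC

end GoodLists

section DiracHard

variable {V : Type}

lemma goodList_exists {H : SimpleGraph V} {S C : Set V} (hC : IsCompOf H S C)
    {a b u1 v1 : V} (hu1 : u1 ∈ C) (hv1 : v1 ∈ C)
    (hu1a : H.Adj u1 a) (hv1b : H.Adj v1 b) :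
    ∃ L, GoodList H C a b L := by
  obtain ⟨M, hc, hh, hl, hm⟩ := exists_goodList_of_comp hC hu1 hv1
  have hMne : M ≠ [] := by intro h; rw [h] at hh; simp at hh
  refine ⟨a :: (M ++ [b]), ?_, ?_, ?_, ?_, ?_⟩
  · simp only [List.length_cons, List.length_append, List.length_singleton]; omega
  · show List.IsChain _ _
    rw [List.isChain_cons]
    constructor
    · intro z hz
      rw [List.head?_append, hh, Option.some_or] at hz
      simp only [Option.mem_def, Option.some_inj] at hz
      rw [← hz]
      exact hu1a.symm
    · rw [List.isChain_append]
      refine ⟨hc, by simp, ?_⟩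
      intro z hz w hw
      rw [hl] at hz
      simp only [Option.mem_def, Option.some_inj, List.head?_cons] at hz hw
      rw [← hz, ← hw]
      exact hv1b
  · simp
  · rw [List.getLast?_cons, List.getLast?_append]
    simp
  · intro w hw
    rcases List.mem_cons.1 hw with hw | hw
    · exact Or.inl hw
    · rcases List.mem_append.1 hw with hw | hw
      · exact Or.inr (Or.inr (hm w hw))
      · simp at hw; exact Or.inr (Or.inl hw)

lemma getElem_idx_congr {α : Type*} {l : List α} {i j : ℕ} (h : i = j)
    (hi : i < l.length) : l[i]'hi = l[j]'(h ▸ hi) := by subst h; rfl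

lemma glue_len {V : Type} {L1 L2 : List V} (h2 : 3 ≤ L2.length) :
    (L1 ++ ((L2.drop 1).dropLast).reverse).length = L1.length + L2.length - 2 := by
  simp only [List.length_append, List.length_reverse, List.length_dropLast,
    List.length_drop]
  omega

lemma glue_get_right {V : Type} {L1 L2 : List V} {p : ℕ} (h2 : 3 ≤ L2.length)
    (hp1 : L1.length ≤ p) (hp : p < L1.length + L2.length - 2) :
    (L1 ++ ((L2.drop 1).dropLast).reverse)[p]'(by rw [glue_len h2]; omega)
      = L2[L1.length + L2.length - 2 - p]'(by omega) := by
  rw [List.getElem_append_right hp1, List.getElem_reverse, List.getElem_dropLast,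
    List.getElem_drop]
  apply getElem_idx_congr
  simp only [List.length_reverse, List.length_dropLast, List.length_drop]
  omega

lemma glued_cycle_contradiction {V : Type} {H : SimpleGraph V} {Cx Cy : Set V}
    {a b : V}
    (hch : IsChordal H) (hab : a ≠ b) (hnadj : ¬H.Adj a b)
    (haCx : a ∉ Cx) (hbCx : b ∉ Cx) (haCy : a ∉ Cy) (hbCy : b ∉ Cy)
    (hCdisj : ∀ v, v ∈ Cx → v ∈ Cy → False)
    (hcross : ∀ u v, u ∈ Cx → v ∈ Cy → ¬H.Adj u v)
    {L1 : List V} (hL1 : GoodList H Cx a b L1) (hnd1 : L1.Nodup)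
    (hind1 : ∀ p q : ℕ, p + 2 ≤ q → ∀ (hq : q < L1.length) (hp : p < L1.length),
      ¬H.Adj (L1[p]'hp) (L1[q]'hq))
    (hinj1 : ∀ p q (hp : p < L1.length) (hq : q < L1.length), L1[p] = L1[q] → p = q)
    (hint1 : ∀ p (hp : p < L1.length), 1 ≤ p → p ≤ L1.length - 2 → L1[p] ∈ Cx)
    (h31 : 3 ≤ L1.length)
    {L2 : List V} (hL2 : GoodList H Cy a b L2) (hnd2 : L2.Nodup)
    (hind2 : ∀ p q : ℕ, p + 2 ≤ q → ∀ (hq : q < L2.length) (hp : p < L2.length),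
      ¬H.Adj (L2[p]'hp) (L2[q]'hq))
    (hinj2 : ∀ p q (hp : p < L2.length) (hq : q < L2.length), L2[p] = L2[q] → p = q)
    (hint2 : ∀ p (hp : p < L2.length), 1 ≤ p → p ≤ L2.length - 2 → L2[p] ∈ Cy)
    (h32 : 3 ≤ L2.length) : False := by
  have hI2len : ((L2.drop 1).dropLast).length = L2.length - 2 := by
    simp only [List.length_dropLast, List.length_drop]
    omega
  have hI2get : ∀ t (ht : t < L2.length - 2),
      ((L2.drop 1).dropLast)[t]'(by omega) = L2[t + 1]'(by omega) := by
    intro t ht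
    rw [List.getElem_dropLast, List.getElem_drop]
    exact getElem_idx_congr (by omega) _
  have hI2mem : ∀ v, v ∈ (L2.drop 1).dropLast → v ∈ Cy := by
    intro v hv
    obtain ⟨t, ht, rfl⟩ := List.mem_iff_getElem.1 hv
    rw [hI2get t (by omega)]
    exact hint2 (t + 1) (by omega) (by omega) (by omega)
  have hNl := glue_len (L2 := L2) (L1 := L1) h32
  have hLcne : (L1 ++ ((L2.drop 1).dropLast).reverse) ≠ [] := by
    intro h
    have := congrArg List.length h
    rw [hNl] at this
    simp at this
    omega
  -- nodup
  have hndc : (L1 ++ ((L2.drop 1).dropLast).reverse).Nodup := by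
    rw [List.nodup_append]
    refine ⟨hnd1, ?_, ?_⟩
    · rw [List.nodup_reverse]
      exact ((List.dropLast_sublist _).trans (List.drop_sublist _ _)).nodup hnd2
    · intro v hv1 w hv2 hvw
      subst hvw
      rw [List.mem_reverse] at hv2
      have hvCy : v ∈ Cy := hI2mem v hv2
      rcases hL1.2.2.2.2 v hv1 with h | h | h
      · exact haCy (h ▸ hvCy)
      · exact hbCy (h ▸ hvCy)
      · exact hCdisj v h hvCy
  -- chain
  have hchainc : (L1 ++ ((L2.drop 1).dropLast).reverse).Chain' H.Adj := by
    show List.IsChain _ _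
    rw [List.isChain_append]
    refine ⟨hL1.2.1, ?_, ?_⟩
    · rw [List.isChain_reverse]
      have hc : ((L2.drop 1).dropLast).Chain' H.Adj := by
        rw [List.dropLast_eq_take]
        exact (hL2.2.1.drop 1).take _
      exact hc.imp (fun u v h => h.symm)
    · intro z hz w hw
      rw [hL1.2.2.2.1] at hz
      rw [List.head?_reverse, List.getLast?_eq_getElem?,
        List.getElem?_eq_getElem (by omega : ((L2.drop 1).dropLast).length - 1 < ((L2.drop 1).dropLast).length)] at hw
      simp only [Option.mem_def, Option.some_inj] at hz hw
      subst hz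
      have hwv : w = L2[L2.length - 2]'(by omega) := by
        rw [← hw]
        rw [getElem_idx_congr (show ((L2.drop 1).dropLast).length - 1 = L2.length - 3 by omega)]
        rw [hI2get (L2.length - 3) (by omega)]
        exact getElem_idx_congr (by omega) _
      subst hwv
      have hc := List.isChain_iff_getElem.1 hL2.2.1 (L2.length - 2) (by omega)
      have hlast : L2[L2.length - 2 + 1]'(by omega) = b := by
        rw [getElem_idx_congr (show L2.length - 2 + 1 = L2.length - 1 by omega)]
        exact hL2.getElem_last (by omega)
      rw [hlast] at hc
      exact hc.symm
  -- wrap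
  have hwrap : H.Adj ((L1 ++ ((L2.drop 1).dropLast).reverse).getLast hLcne)
      ((L1 ++ ((L2.drop 1).dropLast).reverse).head hLcne) := by
    have hlast : (L1 ++ ((L2.drop 1).dropLast).reverse).getLast hLcne
        = L2[1]'(by omega) := by
      have h1 : (L1 ++ ((L2.drop 1).dropLast).reverse).getLast? = some (L2[1]'(by omega)) := by
        rw [List.getLast?_append, List.getLast?_reverse]
        rw [List.head?_eq_getElem?, List.getElem?_eq_getElem (by omega : 0 < ((L2.drop 1).dropLast).length)]
        rw [hI2get 0 (by omega)]
        simp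
      rw [List.getLast?_eq_getLast hLcne] at h1
      exact Option.some_inj.1 h1
    have hhead : (L1 ++ ((L2.drop 1).dropLast).reverse).head hLcne = a := by
      have h1 : (L1 ++ ((L2.drop 1).dropLast).reverse).head? = some a := by
        rw [List.head?_append, hL1.2.2.1, Option.some_or]
      rw [List.head?_eq_head hLcne] at h1
      exact Option.some_inj.1 h1
    rw [hlast, hhead]
    have hc := List.isChain_iff_getElem.1 hL2.2.1 0 (by omega)
    have h0 : L2[0]'(by omega) = a := hL2.getElem_zero (by omega)
    rw [h0] at hc
    exact hc.symm
  -- get the chord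
  obtain ⟨p, q, hp, hq, hnc1, hnc2, hadj⟩ :=
    chordOfList hch _ (by rw [hNl]; omega) hndc hchainc hLcne hwrap
  simp only [List.get_eq_getElem] at hadj
  rw [hNl] at hp hq hnc1 hnc2
  -- a symmetric-in-(p,q) treatment
  have main : ∀ p q (hp : p < L1.length + L2.length - 2)
      (hq : q < L1.length + L2.length - 2), p < q →
      q ≠ (p + 1) % (L1.length + L2.length - 2) →
      p ≠ (q + 1) % (L1.length + L2.length - 2) →
      ¬H.Adj ((L1 ++ ((L2.drop 1).dropLast).reverse)[p]'(by rw [glue_len h32]; omega))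
        ((L1 ++ ((L2.drop 1).dropLast).reverse)[q]'(by rw [glue_len h32]; omega)) := by
    intro p q hp hq hpq hnc1 hnc2 hadj
    have hq2 : p + 2 ≤ q := by
      rcases Nat.lt_or_ge (p + 1) (L1.length + L2.length - 2) with h' | h'
      · have : q ≠ p + 1 := by
          intro h
          exact hnc1 (by rw [h, Nat.mod_eq_of_lt h'])
        omega
      · omega
    have hq0 : q = L1.length + L2.length - 2 - 1 → p ≠ 0 := by
      intro hq' h0
      apply hnc2
      rw [h0, hq', Nat.sub_add_cancel (by omega), Nat.mod_self]
    rcases Nat.lt_or_ge q L1.length with hqlt | hqge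
    · -- both in L1
      rw [List.getElem_append_left (by omega : p < L1.length),
        List.getElem_append_left hqlt] at hadj
      exact hind1 p q hq2 hqlt (by omega) hadj
    · have hjq : L1.length + L2.length - 2 - q ≤ L2.length - 2 := by omega
      have hjq1 : 1 ≤ L1.length + L2.length - 2 - q := by omega
      rw [glue_get_right h32 hqge (by omega)] at hadj
      rcases Nat.lt_or_ge p L1.length with hplt | hpge
      · rw [List.getElem_append_left hplt] at hadj
        by_cases hp0 : p = 0
        · -- vertex a against L2 interior
          subst hp0
          have ha : L1[0]'(by omega) = a := hL1.getElem_zero (by omega)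
          rw [ha] at hadj
          have hne1' : L1.length + L2.length - 2 - q ≠ 1 := by
            intro h1
            exact hq0 (by omega) rfl
          have := hind2 0 (L1.length + L2.length - 2 - q) (by omega) (by omega) (by omega)
          rw [hL2.getElem_zero (by omega)] at this
          exact this hadj
        · by_cases hpl : p = L1.length - 1
          · -- vertex b against L2 interior
            subst hpl
            have hb : L1[L1.length - 1]'(by omega) = b := hL1.getElem_last (by omega)
            rw [hb] at hadj
            have hjqq : L1.length + L2.length - 2 - q ≠ L2.length - 2 := by
              intro h1
              have : q = L1.length := by omega
              omega
            have := hind2 (L1.length + L2.length - 2 - q) (L2.length - 1)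
              (by omega) (by omega) (by omega)
            rw [hL2.getElem_last (by omega)] at this
            exact this hadj.symm
          · -- interior of L1 against interior of L2
            have h1 : L1[p] ∈ Cx := hint1 p hplt (by omega) (by omega)
            have h2 : L2[L1.length + L2.length - 2 - q]'(by omega) ∈ Cy :=
              hint2 _ (by omega) (by omega) (by omega)
            exact hcross _ _ h1 h2 hadj
      · -- both in L2 interior
        rw [glue_get_right h32 hpge (by omega)] at hadj
        have := hind2 (L1.length + L2.length - 2 - q) (L1.length + L2.length - 2 - p)
          (by omega) (by omega) (by omega)
        exact this hadj.symm
  rcases lt_trichotomy p q with h | h | h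
  · exact main p q hp hq h hnc1 hnc2 hadj
  · subst h
    exact H.loopless.irrefl _ hadj
  · exact main q p hq hp h hnc2 hnc1 hadj.symm

lemma clique_minSeps_of_chordal {H : SimpleGraph V} [Finite V] (hch : IsChordal H)
    {S : Set V} (hS : IsMinSeparator H S) : H.IsClique S := by
  obtain ⟨x, y, hsep, hmin⟩ := hS
  intro a haS b hbS hab
  by_contra hnadj
  obtain ⟨hfx, hfy⟩ := full_compOf_of_minimal hsep hmin
  set Cx := compOf H S x with hCxdef
  set Cy := compOf H S y with hCydef
  have hCxc : IsCompOf H S Cx := isCompOf_compOf hsep.1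
  have hCyc : IsCompOf H S Cy := isCompOf_compOf hsep.2.1
  have hCxy : Cx ≠ Cy := by
    intro h
    apply hsep.2.2.2
    have hy : y ∈ Cx := by rw [h]; exact mem_compOf_self hsep.2.1
    exact hy
  have hCdisj : ∀ v, v ∈ Cx → v ∈ Cy → False := by
    intro v h1 h2
    exact hCxy (hCxc.eq_of_mem hCyc h1 h2)
  have ha1 : a ∈ neighborsOf H Cx := by rw [hfx]; exact haS
  have hb1 : b ∈ neighborsOf H Cx := by rw [hfx]; exact hbS
  have ha2 : a ∈ neighborsOf H Cy := by rw [hfy]; exact haS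
  have hb2 : b ∈ neighborsOf H Cy := by rw [hfy]; exact hbS
  obtain ⟨haCx, u1, hu1, hu1a⟩ := ha1
  obtain ⟨hbCx, v1, hv1, hv1b⟩ := hb1
  obtain ⟨haCy, u2, hu2, hu2a⟩ := ha2
  obtain ⟨hbCy, v2, hv2, hv2b⟩ := hb2
  have hcross : ∀ u v, u ∈ Cx → v ∈ Cy → ¬H.Adj u v := by
    intro u v hu hv hadj
    exact hCdisj v (hCxc.adj_mem hu hadj (hCyc.not_mem hv)) hv
  obtain ⟨L1, hL1, hnd1, hind1⟩ :=
    exists_induced_goodList hab (goodList_exists hCxc hu1 hv1 hu1a hv1b)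
  obtain ⟨L2, hL2, hnd2, hind2⟩ :=
    exists_induced_goodList hab (goodList_exists hCyc hu2 hv2 hu2a hv2b)
  have h21 : 2 ≤ L1.length := hL1.1
  have h22 : 2 ≤ L2.length := hL2.1
  have hinj1 : ∀ p q (hp : p < L1.length) (hq : q < L1.length),
      L1[p] = L1[q] → p = q := by
    intro p q hp hq hpq
    have := List.nodup_iff_injective_get.1 hnd1
      (show L1.get ⟨p, hp⟩ = L1.get ⟨q, hq⟩ by simpa using hpq)
    exact congrArg Fin.val this
  have hinj2 : ∀ p q (hp : p < L2.length) (hq : q < L2.length),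
      L2[p] = L2[q] → p = q := by
    intro p q hp hq hpq
    have := List.nodup_iff_injective_get.1 hnd2
      (show L2.get ⟨p, hp⟩ = L2.get ⟨q, hq⟩ by simpa using hpq)
    exact congrArg Fin.val this
  have h31 : 3 ≤ L1.length := by
    rcases Nat.lt_or_ge L1.length 3 with h' | h'
    · exfalso
      have := List.isChain_iff_getElem.1 hL1.2.1 0 (by omega)
      apply hnadj
      have e0 : L1[0]'(by omega) = a := hL1.getElem_zero (by omega)
      have e1 : L1[0 + 1]'(by omega) = b := by
        rw [getElem_idx_congr (show 0 + 1 = L1.length - 1 by omega)]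
        exact hL1.getElem_last (by omega)
      rwa [e0, e1] at this
    · exact h'
  have h32 : 3 ≤ L2.length := by
    rcases Nat.lt_or_ge L2.length 3 with h' | h'
    · exfalso
      have := List.isChain_iff_getElem.1 hL2.2.1 0 (by omega)
      apply hnadj
      have e0 : L2[0]'(by omega) = a := hL2.getElem_zero (by omega)
      have e1 : L2[0 + 1]'(by omega) = b := by
        rw [getElem_idx_congr (show 0 + 1 = L2.length - 1 by omega)]
        exact hL2.getElem_last (by omega)
      rwa [e0, e1] at this
    · exact h'
  have hint1 : ∀ p (hp : p < L1.length), 1 ≤ p → p ≤ L1.length - 2 → L1[p] ∈ Cx := by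
    intro p hp hge hle
    rcases hL1.2.2.2.2 L1[p] (List.getElem_mem hp) with h | h | h
    · exact absurd (hinj1 p 0 hp (by omega) (by rw [h, hL1.getElem_zero (by omega)]))
        (by omega)
    · exact absurd (hinj1 p (L1.length - 1) hp (by omega)
        (by rw [h, hL1.getElem_last (by omega)])) (by omega)
    · exact h
  have hint2 : ∀ p (hp : p < L2.length), 1 ≤ p → p ≤ L2.length - 2 → L2[p] ∈ Cy := by
    intro p hp hge hle
    rcases hL2.2.2.2.2 L2[p] (List.getElem_mem hp) with h | h | h
    · exact absurd (hinj2 p 0 hp (by omega) (by rw [h, hL2.getElem_zero (by omega)]))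
        (by omega)
    · exact absurd (hinj2 p (L2.length - 1) hp (by omega)
        (by rw [h, hL2.getElem_last (by omega)])) (by omega)
    · exact h
  exact glued_cycle_contradiction hch hab hnadj haCx hbCx haCy hbCy hCdisj hcross
    hL1 hnd1 hind1 hinj1 hint1 h31 hL2 hnd2 hind2 hinj2 hint2 h32

end DiracHard

section FillEdges

variable {V : Type}

lemma sep_univ_diff {H : SimpleGraph V} {a b : V} (hab : a ≠ b) (hnadj : ¬H.Adj a b)
    (hreach : H.Reachable a b) : IsSeparator H (Set.univ \ {a, b}) a b := by
  refine ⟨by simp, by simp, hreach, ?_⟩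
  intro hav
  rw [avoidReach_iff] at hav
  rcases hav.2.cases_head with heq | ⟨c, hstep, -⟩
  · exact hab heq
  · have hc : c ∈ ({a, b} : Set V) := by
      by_contra hc
      exact hstep.2.2 ⟨trivial, hc⟩
    rcases hc with hc | hc
    · exact H.loopless.irrefl a (hc ▸ hstep.1)
    · exact hnadj (hc ▸ hstep.1)

/-- If a cycle in `H''` has all of its `H`-chords equal (as pairs) to the single
chord `{f i₀, f j₀}`, then the arc from `i₀` to `j₀` has length 2. -/
lemma arc_two {H H'' : SimpleGraph V} (hch : IsChordal H) (hle : H'' ≤ H)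
    {n : ℕ} (hn : 4 ≤ n) [NeZero n]
    (f : ZMod n → V) (hinj : Function.Injective f)
    (hadj : ∀ i, H''.Adj (f i) (f (i + 1)))
    (i₀ j₀ : ZMod n) (hc1 : j₀ ≠ i₀ + 1) (hc2 : i₀ ≠ j₀ + 1)
    (hchord : H.Adj (f i₀) (f j₀))
    (hunique : ∀ i j : ZMod n, j ≠ i + 1 → i ≠ j + 1 → H.Adj (f i) (f j) →
      (f i = f i₀ ∧ f j = f j₀) ∨ (f i = f j₀ ∧ f j = f i₀)) :
    (j₀ - i₀).val = 2 := by
  classical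
  have hij : i₀ ≠ j₀ := fun h => H.loopless.irrefl _ (h ▸ hchord)
  have hcast : ((j₀ - i₀).val : ZMod n) = j₀ - i₀ := ZMod.natCast_rightInverse _
  set d : ℕ := (j₀ - i₀).val with hd
  have hdlt : d < n := ZMod.val_lt _
  have hdne : d ≠ 0 := by
    intro h0
    apply hij
    have h : j₀ - i₀ = 0 := by rw [← hcast, h0]; simp
    exact (sub_eq_zero.1 h).symm
  have hd1 : d ≠ 1 := by
    intro h1
    apply hc1
    have h : j₀ - i₀ = 1 := by rw [← hcast, h1]; simp
    rw [sub_eq_iff_eq_add.1 h, add_comm]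
  have hdn1 : d ≠ n - 1 := by
    intro h1
    apply hc2
    have h : j₀ - i₀ = ((n - 1 : ℕ) : ZMod n) := by rw [← hcast, h1]
    have h2 : ((n - 1 : ℕ) : ZMod n) = -1 := by
      have : ((n - 1 : ℕ) : ZMod n) + 1 = ((n - 1 + 1 : ℕ) : ZMod n) := by push_cast; ring
      have h3 : ((n - 1 + 1 : ℕ) : ZMod n) = 0 := by
        rw [show n - 1 + 1 = n by omega]; simp
      linear_combination this + h3
    rw [h2] at h
    have : i₀ = j₀ + 1 := by linear_combination -h
    exact this
  by_contra hd2
  have hd3 : 3 ≤ d := by omega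
  -- the arc list
  have hfj : f (i₀ + (d : ZMod n)) = f j₀ := by rw [hcast]; ring_nf
  set M : List V := List.ofFn (fun t : Fin (d + 1) => f (i₀ + ((t : ℕ) : ZMod n))) with hM
  have hMlen : M.length = d + 1 := List.length_ofFn
  have hMne : M ≠ [] := by
    intro h
    have := congrArg List.length h
    rw [hMlen] at this
    simp at this
  have hMget : ∀ t (ht : t < d + 1), M[t]'(by omega) = f (i₀ + ((t : ℕ) : ZMod n)) := by
    intro t ht
    show (List.ofFn (fun s : Fin (d + 1) => f (i₀ + ((s : ℕ) : ZMod n))))[t]'(by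
      rw [List.length_ofFn]; omega) = f (i₀ + ((t : ℕ) : ZMod n))
    rw [List.getElem_ofFn]
  have hMnd : M.Nodup := by
    rw [hM, List.nodup_ofFn]
    intro s t hst
    have := hinj hst
    have h2 : ((s : ℕ) : ZMod n) = ((t : ℕ) : ZMod n) := by
      have := congrArg (fun z => z - i₀) this
      simpa using this
    exact Fin.ext (zmod_cast_inj (by omega) (by omega) h2)
  have hMchain : M.Chain' H.Adj := by
    show List.IsChain _ _
    rw [List.isChain_iff_getElem]
    intro t ht
    rw [hMlen] at ht
    rw [hMget t (by omega), hMget (t + 1) (by omega)]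
    have := hle (hadj (i₀ + ((t : ℕ) : ZMod n)))
    have harith : i₀ + ((t : ℕ) : ZMod n) + 1 = i₀ + (((t + 1 : ℕ)) : ZMod n) := by
      push_cast; ring
    rwa [harith] at this
  have hMwrap : H.Adj (M.getLast hMne) (M.head hMne) := by
    have h1 : M.getLast hMne = f j₀ := by
      rw [List.getLast_eq_getElem hMne]
      rw [hMget (M.length - 1) (by omega)]
      rw [hMlen]
      simp only [Nat.add_sub_cancel]
      exact hfj
    have h2 : M.head hMne = f i₀ := by
      have h3 : M.head? = some (f i₀) := by
        rw [List.head?_eq_getElem?, List.getElem?_eq_getElem (by omega : 0 < M.length)]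
        rw [hMget 0 (by omega)]
        simp
      rw [List.head?_eq_head hMne] at h3
      exact Option.some_inj.1 h3
    rw [h1, h2]
    exact hchord.symm
  obtain ⟨p, q, hp, hq, hnc1, hnc2, hadj'⟩ :=
    chordOfList hch M (by omega) hMnd hMchain hMne hMwrap
  rw [hMlen] at hp hq hnc1 hnc2
  simp only [List.get_eq_getElem] at hadj'
  rw [hMget p hp, hMget q hq] at hadj'
  have hcastinj : ∀ s t : ℕ, s < n → t < n →
      i₀ + ((s : ℕ) : ZMod n) = i₀ + ((t : ℕ) : ZMod n) → s = t := by
    intro s t hs ht h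
    have h2 : ((s : ℕ) : ZMod n) = ((t : ℕ) : ZMod n) := by
      have := congrArg (fun z => z - i₀) h
      simpa using this
    exact zmod_cast_inj hs ht h2
  have claimA : i₀ + ((q : ℕ) : ZMod n) ≠ (i₀ + ((p : ℕ) : ZMod n)) + 1 := by
    intro h
    have h2 : i₀ + ((q : ℕ) : ZMod n) = i₀ + (((p + 1 : ℕ)) : ZMod n) := by
      rw [h]; push_cast; ring
    have := hcastinj q (p + 1) (by omega) (by omega) h2
    apply hnc1
    rw [this, Nat.mod_eq_of_lt (by omega)]
  have claimB : i₀ + ((p : ℕ) : ZMod n) ≠ (i₀ + ((q : ℕ) : ZMod n)) + 1 := by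
    intro h
    have h2 : i₀ + ((p : ℕ) : ZMod n) = i₀ + (((q + 1 : ℕ)) : ZMod n) := by
      rw [h]; push_cast; ring
    have := hcastinj p (q + 1) (by omega) (by omega) h2
    apply hnc2
    rw [this, Nat.mod_eq_of_lt (by omega)]
  have h0cast : f (i₀ + ((0 : ℕ) : ZMod n)) = f i₀ := by norm_num
  rcases hunique _ _ claimA claimB hadj' with ⟨h1, h2⟩ | ⟨h1, h2⟩
  · have hp0 : p = 0 :=
      hcastinj p 0 (by omega) (by omega) (hinj (h1.trans h0cast.symm))
    have hqd : q = d :=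
      hcastinj q d (by omega) (by omega) (hinj (h2.trans hfj.symm))
    apply hnc2
    rw [hp0, hqd, Nat.mod_self]
  · have hpd : p = d :=
      hcastinj p d (by omega) (by omega) (hinj (h1.trans hfj.symm))
    have hq0 : q = 0 :=
      hcastinj q 0 (by omega) (by omega) (hinj (h2.trans h0cast.symm))
    apply hnc1
    rw [hpd, hq0, Nat.mod_self]

lemma fill_in_minsep {V : Type} {G H : SimpleGraph V} [Finite V]
    (hmt : IsMinimalTriangulation G H) {u v : V} (huv : H.Adj u v)
    (hnG : ¬G.Adj u v) :
    ∃ S, S ∈ minSeps H ∧ u ∈ S ∧ v ∈ S := by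
  have hch : IsChordal H := hmt.1.1
  have hle : H.deleteEdges {s(u, v)} ≤ H := SimpleGraph.deleteEdges_le _
  have hGle : G ≤ H.deleteEdges {s(u, v)} := by
    intro a b hab
    rw [SimpleGraph.deleteEdges_adj]
    refine ⟨hmt.1.2 hab, ?_⟩
    intro h
    simp only [Set.mem_singleton_iff] at h
    rcases Sym2.eq_iff.1 h with ⟨h1, h2⟩ | ⟨h1, h2⟩
    · exact hnG (h1 ▸ h2 ▸ hab)
    · exact hnG (h1 ▸ h2 ▸ hab.symm)
  have hne : H.deleteEdges {s(u, v)} ≠ H := by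
    intro h
    have h2 : (H.deleteEdges {s(u, v)}).Adj u v := by rw [h]; exact huv
    rw [SimpleGraph.deleteEdges_adj] at h2
    exact h2.2 (by simp)
  have hnch : ¬IsChordal (H.deleteEdges {s(u, v)}) :=
    fun hc => hne (hmt.2 _ ⟨hc, hGle⟩ hle)
  rw [IsChordal] at hnch
  push_neg at hnch
  obtain ⟨n, hn, f, hinj, hadj, hnochord⟩ := hnch
  haveI : NeZero n := ⟨by omega⟩
  have hrm : ∀ i j : ZMod n, j ≠ i + 1 → i ≠ j + 1 → H.Adj (f i) (f j) →
      s(f i, f j) = s(u, v) := by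
    intro i j h1 h2 h3
    by_contra hmem
    refine hnochord i j h1 h2 ?_
    rw [SimpleGraph.deleteEdges_adj]
    exact ⟨h3, by simpa using hmem⟩
  obtain ⟨i₀, j₀, hc1, hc2, hchord⟩ := hch n hn f hinj (fun k => hle (hadj k))
  have hpair := hrm i₀ j₀ hc1 hc2 hchord
  have hunique : ∀ i j : ZMod n, j ≠ i + 1 → i ≠ j + 1 → H.Adj (f i) (f j) →
      (f i = f i₀ ∧ f j = f j₀) ∨ (f i = f j₀ ∧ f j = f i₀) := by
    intro i j h1 h2 h3
    exact Sym2.eq_iff.1 ((hrm i j h1 h2 h3).trans hpair.symm)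
  have hd2 := arc_two hch hle hn f hinj hadj i₀ j₀ hc1 hc2 hchord hunique
  have hd2' := arc_two hch hle hn f hinj hadj j₀ i₀ hc2 hc1 hchord.symm (by
    intro i j h1 h2 h3
    rcases hunique i j h1 h2 h3 with ⟨ha, hb⟩ | ⟨ha, hb⟩
    · exact Or.inr ⟨ha, hb⟩
    · exact Or.inl ⟨ha, hb⟩)
  have hij : i₀ ≠ j₀ := fun h => H.loopless.irrefl _ (h ▸ hchord)
  have hn4 : n = 4 := by
    have hne0 : (j₀ - i₀) ≠ 0 := fun h => hij (sub_eq_zero.1 h).symm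
    have hv1 : (i₀ - j₀).val = n - (j₀ - i₀).val := by
      rw [show i₀ - j₀ = -(j₀ - i₀) by ring, ZMod.neg_val, if_neg hne0]
    have hv2 : (j₀ - i₀).val < n := ZMod.val_lt _
    omega
  have hcast2 : ((2 : ℕ) : ZMod n) = j₀ - i₀ := by
    have h := ZMod.natCast_rightInverse (n := n) (j₀ - i₀)
    rwa [hd2] at h
  have hj : j₀ = i₀ + ((2 : ℕ) : ZMod n) := by rw [hcast2]; ring
  have h4cast : ((4 : ℕ) : ZMod n) = 0 := by
    rw [show (4 : ℕ) = n by omega, ZMod.natCast_self]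
  have e1 : H.Adj (f i₀) (f (i₀ + 1)) := hle (hadj i₀)
  have e2 : H.Adj (f (i₀ + 1)) (f j₀) := by
    have h := hle (hadj (i₀ + 1))
    rwa [show i₀ + 1 + 1 = j₀ by rw [hj]; push_cast; ring] at h
  have e3 : H.Adj (f j₀) (f (j₀ + 1)) := hle (hadj j₀)
  have e4 : H.Adj (f (j₀ + 1)) (f i₀) := by
    have h := hle (hadj (j₀ + 1))
    have harith : j₀ + 1 + 1 = i₀ := by
      rw [hj]
      push_cast at h4cast ⊢
      linear_combination h4cast
    rwa [harith] at h
  have hcastne : ∀ s t : ℕ, s < n → t < n → s ≠ t →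
      ((s : ℕ) : ZMod n) ≠ ((t : ℕ) : ZMod n) := fun s t hs ht hst h =>
    hst (zmod_cast_inj hs ht h)
  have hnab : ¬H.Adj (f (i₀ + 1)) (f (j₀ + 1)) := by
    intro h
    have cond1 : j₀ + 1 ≠ (i₀ + 1) + 1 := by
      intro h'
      exact hc1 (by linear_combination h')
    have cond2 : i₀ + 1 ≠ (j₀ + 1) + 1 := by
      intro h'
      exact hc2 (by linear_combination h')
    rcases hunique _ _ cond1 cond2 h with ⟨h1, h2⟩ | ⟨h1, h2⟩
    · have h3 := hinj h1
      have h4 : ((1 : ℕ) : ZMod n) = ((0 : ℕ) : ZMod n) := by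
        push_cast
        linear_combination h3
      exact hcastne 1 0 (by omega) (by omega) (by omega) h4
    · have h3 := hinj h1
      rw [hj] at h3
      have h4 : ((1 : ℕ) : ZMod n) = ((2 : ℕ) : ZMod n) := by
        push_cast
        linear_combination h3
      exact hcastne 1 2 (by omega) (by omega) (by omega) h4
  have hab' : f (i₀ + 1) ≠ f (j₀ + 1) := by
    intro h
    exact hij (by linear_combination hinj h)
  have hreach : H.Reachable (f (i₀ + 1)) (f (j₀ + 1)) := e2.reachable.trans e3.reachable
  obtain ⟨T, hTsub, hTsep, hTmin⟩ := exists_minimal_separator (sep_univ_diff hab' hnab hreach)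
  have hTm : IsMinSeparator H T := ⟨_, _, hTsep, hTmin⟩
  have hu'T : f i₀ ∈ T := by
    by_contra h
    exact hTsep.2.2.2 ((avoidReach_of_adj e1.symm hTsep.1 h).trans
      (avoidReach_of_adj e4.symm h hTsep.2.1))
  have hv'T : f j₀ ∈ T := by
    by_contra h
    exact hTsep.2.2.2 ((avoidReach_of_adj e2 hTsep.1 h).trans
      (avoidReach_of_adj e3 h hTsep.2.1))
  rcases Sym2.eq_iff.1 hpair with ⟨h1, h2⟩ | ⟨h1, h2⟩
  · exact ⟨T, hTm, h1 ▸ hu'T, h2 ▸ hv'T⟩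
  · exact ⟨T, hTm, h2 ▸ hv'T, h1 ▸ hu'T⟩

end FillEdges

section MinTriang

variable {V : Type}

lemma exists_crossing {G : SimpleGraph V} {S D : Set V} {x c : V}
    (h : Relation.ReflTransGen (AStep G S) x c) :
    x ∈ D → c ∉ D → ∃ a b, a ∈ D ∧ b ∉ D ∧ b ∉ S ∧ G.Adj a b := by
  induction h using Relation.ReflTransGen.head_induction_on with
  | refl => intro hx hc; exact absurd hx hc
  | @head a z hstep hrest ih =>
    intro ha hc
    by_cases hz : z ∈ D
    · exact ih hz hc
    · exact ⟨a, z, ha, hz, hstep.2.2, hstep.1⟩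

/-- In a minimal triangulation, components of `H - S` (for `S` a clique of `H`)
are components of `G - S`. -/
lemma comp_eq_of_minimal {G H : SimpleGraph V} [Finite V]
    (hmt : IsMinimalTriangulation G H) {S : Set V} (hScl : H.IsClique S)
    {C : Set V} (hC : IsCompOf H S C) {x : V} (hx : x ∈ C) :
    C = compOf G S x := by
  have hxS : x ∉ S := hC.not_mem hx
  have hDC : compOf G S x ⊆ C := by
    intro d hd
    exact hC.mem_of_avoidReach hx (AvoidReach.mono hmt.1.2 hd)
  by_contra hne
  have hCD : ∃ c, c ∈ C ∧ c ∉ compOf G S x := by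
    by_contra h
    push_neg at h
    exact hne (Set.Subset.antisymm h hDC)
  obtain ⟨c, hcC, hcD⟩ := hCD
  set D := compOf G S x with hDdef
  have hDc : IsCompOf G S D := isCompOf_compOf hxS
  set P : Set (Sym2 V) := {e | ∃ p ∈ D, ∃ q ∈ C \ D, e = s(p, q)} with hP
  have hle : H.deleteEdges P ≤ H := SimpleGraph.deleteEdges_le _
  have hrem : ∀ a b, H.Adj a b → ¬(H.deleteEdges P).Adj a b →
      ((a ∈ D ∧ b ∉ D ∧ ∀ a' ∈ D, ¬(H.deleteEdges P).Adj a' b) ∨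
        (b ∈ D ∧ a ∉ D ∧ ∀ b' ∈ D, ¬(H.deleteEdges P).Adj b' a)) := by
    intro a b hab hnab
    have hmem : s(a, b) ∈ P := by
      by_contra h
      exact hnab (by rw [SimpleGraph.deleteEdges_adj]; exact ⟨hab, h⟩)
    obtain ⟨p, hp, q, hq, he⟩ := hmem
    rcases Sym2.eq_iff.1 he with ⟨h1, h2⟩ | ⟨h1, h2⟩
    · subst h1; subst h2
      refine Or.inl ⟨hp, hq.2, ?_⟩
      intro a' ha' hadj'
      rw [SimpleGraph.deleteEdges_adj] at hadj'
      exact hadj'.2 ⟨a', ha', b, hq, rfl⟩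
    · subst h1; subst h2
      refine Or.inr ⟨hp, hq.2, ?_⟩
      intro b' hb' hadj'
      rw [SimpleGraph.deleteEdges_adj] at hadj'
      exact hadj'.2 ⟨b', hb', a, hq, rfl⟩
  have hexit : ∀ a b, (H.deleteEdges P).Adj a b → a ∈ D → b ∉ D → b ∈ S := by
    intro a b hab ha hb
    rw [SimpleGraph.deleteEdges_adj] at hab
    by_contra hbS
    have hbC : b ∈ C := hC.adj_mem (hDC ha) hab.1 hbS
    exact hab.2 ⟨a, ha, b, ⟨hbC, hb⟩, rfl⟩
  have hchordal : IsChordal (H.deleteEdges P) :=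
    core_chordal hmt.1.1 hle hScl (fun b hb => (compOf_disjoint.le_bot ⟨hb, ·⟩)) hrem hexit
  have hGle : G ≤ H.deleteEdges P := by
    intro a b hab
    rw [SimpleGraph.deleteEdges_adj]
    refine ⟨hmt.1.2 hab, ?_⟩
    rintro ⟨p, hp, q, hq, he⟩
    rcases Sym2.eq_iff.1 he with ⟨h1, h2⟩ | ⟨h1, h2⟩
    · subst h1; subst h2
      exact hq.2 (hDc.adj_mem hp hab (hC.not_mem hq.1))
    · subst h1; subst h2
      exact hq.2 (hDc.adj_mem hp hab.symm (hC.not_mem hq.1))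
  have heq := hmt.2 _ ⟨hchordal, hGle⟩ hle
  have hreach := hC.2.2.1 x hx c hcC
  rw [avoidReach_iff] at hreach
  obtain ⟨a, b, haD, hbD, hbS, hab⟩ :=
    exists_crossing hreach.2 (mem_compOf_self hxS) hcD
  have hbC : b ∈ C := hC.adj_mem (hDC haD) hab hbS
  have hnadj : ¬(H.deleteEdges P).Adj a b := by
    rw [SimpleGraph.deleteEdges_adj]
    rintro ⟨-, hmem⟩
    exact hmem ⟨a, haD, b, ⟨hbC, hbD⟩, rfl⟩
  rw [heq] at hnadj
  exact hnadj hab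

/-- Fullness transfers from `H` to `G` in a minimal triangulation. -/
lemma full_eq_of_minimal {G H : SimpleGraph V} [Finite V]
    (hmt : IsMinimalTriangulation G H) {S : Set V} (hScl : H.IsClique S)
    {C : Set V} (hC : IsCompOf H S C) (hfull : neighborsOf H C = S) :
    neighborsOf G C = S := by
  refine Set.Subset.antisymm ?_ ?_
  · intro s hs
    obtain ⟨hsC, w, hwC, hws⟩ := hs
    rw [← hfull]
    exact ⟨hsC, w, hwC, hmt.1.2 hws⟩
  · intro s hsS
    by_contra hsN
    have hsC : s ∉ C := fun h => hC.not_mem h hsS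
    have hnoadj : ∀ w ∈ C, ¬G.Adj w s := by
      intro w hw hadj
      exact hsN ⟨hsC, w, hw, hadj⟩
    set P : Set (Sym2 V) := {e | ∃ p ∈ C, e = s(p, s)} with hP
    have hle : H.deleteEdges P ≤ H := SimpleGraph.deleteEdges_le _
    have hrem : ∀ a b, H.Adj a b → ¬(H.deleteEdges P).Adj a b →
        ((a ∈ C ∧ b ∉ C ∧ ∀ a' ∈ C, ¬(H.deleteEdges P).Adj a' b) ∨
          (b ∈ C ∧ a ∉ C ∧ ∀ b' ∈ C, ¬(H.deleteEdges P).Adj b' a)) := by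
      intro a b hab hnab
      have hmem : s(a, b) ∈ P := by
        by_contra h
        exact hnab (by rw [SimpleGraph.deleteEdges_adj]; exact ⟨hab, h⟩)
      obtain ⟨p, hp, he⟩ := hmem
      rcases Sym2.eq_iff.1 he with ⟨h1, h2⟩ | ⟨h1, h2⟩
      · subst h1; subst h2
        refine Or.inl ⟨hp, hsC, ?_⟩
        intro a' ha' hadj'
        rw [SimpleGraph.deleteEdges_adj] at hadj'
        exact hadj'.2 ⟨a', ha', rfl⟩
      · subst h1; subst h2
        refine Or.inr ⟨hp, hsC, ?_⟩
        intro b' hb' hadj'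
        rw [SimpleGraph.deleteEdges_adj] at hadj'
        exact hadj'.2 ⟨b', hb', rfl⟩
    have hexit : ∀ a b, (H.deleteEdges P).Adj a b → a ∈ C → b ∉ C → b ∈ S := by
      intro a b hab ha hb
      rw [SimpleGraph.deleteEdges_adj] at hab
      by_contra hbS
      exact hb (hC.adj_mem ha hab.1 hbS)
    have hchordal : IsChordal (H.deleteEdges P) :=
      core_chordal hmt.1.1 hle hScl (fun b hb => hC.not_mem hb) hrem hexit
    have hGle : G ≤ H.deleteEdges P := by
      intro a b hab
      rw [SimpleGraph.deleteEdges_adj]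
      refine ⟨hmt.1.2 hab, ?_⟩
      rintro ⟨p, hp, he⟩
      rcases Sym2.eq_iff.1 he with ⟨h1, h2⟩ | ⟨h1, h2⟩
      · subst h1; subst h2
        exact hnoadj a hp hab
      · subst h1; subst h2
        exact hnoadj b hp hab.symm
    have heq := hmt.2 _ ⟨hchordal, hGle⟩ hle
    have hsN' : s ∈ neighborsOf H C := by rw [hfull]; exact hsS
    obtain ⟨-, w, hwC, hws⟩ := hsN'
    have hnadj : ¬(H.deleteEdges P).Adj w s := by
      rw [SimpleGraph.deleteEdges_adj]
      rintro ⟨-, hmem⟩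
      exact hmem ⟨w, hwC, rfl⟩
    rw [heq] at hnadj
    exact hnadj hws

lemma comps_iff_of_minimal {G H : SimpleGraph V} [Finite V]
    (hmt : IsMinimalTriangulation G H) {S : Set V} (hScl : H.IsClique S)
    {C : Set V} : IsCompOf H S C ↔ IsCompOf G S C := by
  constructor
  · intro hC
    obtain ⟨x, hx⟩ := hC.1
    rw [comp_eq_of_minimal hmt hScl hC hx]
    exact isCompOf_compOf (hC.not_mem hx)
  · intro hC
    obtain ⟨x, hx⟩ := hC.1
    have hxS : x ∉ S := hC.not_mem hx
    have h1 : IsCompOf H S (compOf H S x) := isCompOf_compOf hxS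
    have h2 : compOf H S x = compOf G S x :=
      comp_eq_of_minimal hmt hScl h1 (mem_compOf_self hxS)
    have h3 : C = compOf G S x := hC.eq_compOf hx
    rw [h3, ← h2]
    exact h1

end MinTriang

section Part1

variable {V : Type}

/-- `H` restricted to `G`-reachable pairs. -/
def reachSub (G H : SimpleGraph V) : SimpleGraph V where
  Adj a b := H.Adj a b ∧ G.Reachable a b
  symm := ⟨fun _ _ h => ⟨h.1.symm, h.2.symm⟩⟩
  loopless := ⟨fun a h => H.loopless.irrefl a h.1⟩

lemma reach_of_minimal {G H : SimpleGraph V} [Finite V]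
    (hmt : IsMinimalTriangulation G H) {x y : V} (h : H.Adj x y) :
    G.Reachable x y := by
  have hch'' : IsChordal (reachSub G H) := by
    intro n hn f hinj hadj
    haveI : NeZero n := ⟨by omega⟩
    obtain ⟨i, j, h1, h2, h3⟩ := hmt.1.1 n hn f hinj (fun k => (hadj k).1)
    refine ⟨i, j, h1, h2, h3, ?_⟩
    have hreach : ∀ t : ℕ, G.Reachable (f i) (f (i + (t : ZMod n))) := by
      intro t
      induction t with
      | zero => simpa using SimpleGraph.Reachable.refl (f i)
      | succ t ih =>
        refine ih.trans ?_
        have hr := (hadj (i + (t : ZMod n))).2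
        have harith : i + (t : ZMod n) + 1 = i + ((t + 1 : ℕ) : ZMod n) := by
          push_cast; ring
        rwa [harith] at hr
    have hr := hreach (j - i).val
    rwa [show i + (((j - i).val : ℕ) : ZMod n) = j by
      rw [ZMod.natCast_rightInverse]; ring] at hr
  have hGle : G ≤ reachSub G H := fun {a b} hab => ⟨hmt.1.2 hab, hab.reachable⟩
  have hle : reachSub G H ≤ H := fun {a b} hab => hab.1
  have heq := hmt.2 _ ⟨hch'', hGle⟩ hle
  have h2 : (reachSub G H).Adj x y := by rw [heq]; exact h
  exact h2.2

lemma reachable_of_minimal {G H : SimpleGraph V} [Finite V]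
    (hmt : IsMinimalTriangulation G H) {x y : V} (h : H.Reachable x y) :
    G.Reachable x y := by
  obtain ⟨w⟩ := h
  induction w with
  | nil => exact SimpleGraph.Reachable.refl _
  | cons hadj _ ih => exact (reach_of_minimal hmt hadj).trans ih

lemma minSeps_sub_of_minimal {G H : SimpleGraph V} [Finite V]
    (hmt : IsMinimalTriangulation G H) : minSeps H ⊆ minSeps G := by
  rintro S ⟨x, y, hsep, hmin⟩
  have hScl := clique_minSeps_of_chordal hmt.1.1 ⟨x, y, hsep, hmin⟩
  have hfulls := full_compOf_of_minimal hsep hmin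
  have hcx : compOf H S x = compOf G S x :=
    comp_eq_of_minimal hmt hScl (isCompOf_compOf hsep.1) (mem_compOf_self hsep.1)
  have hcy : compOf H S y = compOf G S y :=
    comp_eq_of_minimal hmt hScl (isCompOf_compOf hsep.2.1) (mem_compOf_self hsep.2.1)
  have hsepG : IsSeparator G S x y := by
    refine ⟨hsep.1, hsep.2.1, reachable_of_minimal hmt hsep.2.2.1, ?_⟩
    intro hav
    exact hsep.2.2.2 (hav.mono hmt.1.2)
  refine ⟨x, y, hsepG, minimal_of_full hsepG ?_ ?_⟩
  · rw [← hcx]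
    exact full_eq_of_minimal hmt hScl (isCompOf_compOf hsep.1) hfulls.1
  · rw [← hcy]
    exact full_eq_of_minimal hmt hScl (isCompOf_compOf hsep.2.1) hfulls.2

lemma saturate_eq_of_minimal {G H : SimpleGraph V} [Finite V]
    (hmt : IsMinimalTriangulation G H) : H = saturate G (minSeps H) := by
  apply SimpleGraph.ext
  ext a b
  constructor
  · intro hab
    refine ⟨hab.ne, ?_⟩
    by_cases hG : G.Adj a b
    · exact Or.inl hG
    · obtain ⟨S, hS, haS, hbS⟩ := fill_in_minsep hmt hab hG
      exact Or.inr ⟨S, hS, haS, hbS⟩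
  · rintro ⟨hne, hG | ⟨S, hS, haS, hbS⟩⟩
    · exact hmt.1.2 hG
    · exact clique_minSeps_of_chordal hmt.1.1 hS haS hbS hne

lemma pairwise_parallel_of_minimal {G H : SimpleGraph V} [Finite V]
    (hmt : IsMinimalTriangulation G H) {S T : Set V}
    (hS : S ∈ minSeps H) (hT : T ∈ minSeps H) : Parallel G S T := by
  have hScl := clique_minSeps_of_chordal hmt.1.1 hS
  have hTcl := clique_minSeps_of_chordal hmt.1.1 hT
  intro C hC C' hC'
  exact subsingleton_comps_of_clique hTcl
    ⟨(comps_iff_of_minimal hmt hScl).2 hC.1, hC.2⟩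
    ⟨(comps_iff_of_minimal hmt hScl).2 hC'.1, hC'.2⟩

lemma maximality_of_minimal {G H : SimpleGraph V} [Finite V]
    (hmt : IsMinimalTriangulation G H) :
    ∀ Ψ : Set (Set V), Ψ ⊆ minSeps G → Ψ.Pairwise (Parallel G) →
      minSeps H ⊆ Ψ → Ψ = minSeps H := by
  intro Ψ hΨsub hΨpar hHΨ
  refine Set.Subset.antisymm ?_ hHΨ
  intro T hTΨ
  by_cases hTH : T ∈ minSeps H
  · exact hTH
  exfalso
  obtain ⟨x, y, hsep, hmin⟩ := hΨsub hTΨ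
  obtain ⟨hfx, hfy⟩ := full_compOf_of_minimal hsep hmin
  have hkey : ∀ a b, AStep H T a b → b ∈ compOf G T a := by
    intro a b hstep
    by_cases hG : G.Adj a b
    · exact avoidReach_of_adj hG hstep.2.1 hstep.2.2
    · obtain ⟨S, hSH, haS, hbS⟩ := fill_in_minsep hmt hstep.1 hG
      have hST : S ≠ T := fun h => hTH (h ▸ hSH)
      have hpar : Parallel G T S := hΨpar hTΨ (hHΨ hSH) (Ne.symm hST)
      have h1 : compOf G T a ∈ {C : Set V | IsCompOf G T C ∧ (C ∩ S).Nonempty} :=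
        ⟨isCompOf_compOf hstep.2.1, ⟨a, mem_compOf_self hstep.2.1, haS⟩⟩
      have h2 : compOf G T b ∈ {C : Set V | IsCompOf G T C ∧ (C ∩ S).Nonempty} :=
        ⟨isCompOf_compOf hstep.2.2, ⟨b, mem_compOf_self hstep.2.2, hbS⟩⟩
      have heq := hpar h1 h2
      rw [heq]
      exact mem_compOf_self hstep.2.2
  have hnoH : ¬AvoidReach H T x y := by
    intro hav
    rw [avoidReach_iff] at hav
    have hstay : ∀ c, Relation.ReflTransGen (AStep H T) x c → c ∈ compOf G T x := by
      intro c hc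
      induction hc with
      | refl => exact mem_compOf_self hsep.1
      | @tail c' c h1 h2 ih => exact AvoidReach.trans ih (hkey c' c h2)
    exact hsep.2.2.2 (hstay y hav.2)
  have hsepH : IsSeparator H T x y :=
    ⟨hsep.1, hsep.2.1, hsep.2.2.1.mono hmt.1.2, hnoH⟩
  obtain ⟨T₀, hT₀sub, hT₀sep, hT₀min⟩ := exists_minimal_separator hsepH
  have hTT₀ : T = T₀ := by
    refine Set.Subset.antisymm ?_ hT₀sub
    intro t htT
    by_contra htT₀
    have h1 : t ∈ neighborsOf G (compOf G T x) := by rw [hfx]; exact htT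
    have h2 : t ∈ neighborsOf G (compOf G T y) := by rw [hfy]; exact htT
    obtain ⟨-, u, hu, hut⟩ := h1
    obtain ⟨-, w, hw, hwt⟩ := h2
    have huT : u ∉ T := AvoidReach.notMem_right hu
    have hwT : w ∉ T := AvoidReach.notMem_right hw
    have hav : AvoidReach H T₀ x y :=
      ((((hu.mono_set hT₀sub).mono hmt.1.2).trans
        (avoidReach_of_adj (hmt.1.2 hut) (fun hh => huT (hT₀sub hh)) htT₀)).trans
        (avoidReach_of_adj (hmt.1.2 hwt.symm) htT₀ (fun hh => hwT (hT₀sub hh)))).trans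
        ((hw.symm.mono_set hT₀sub).mono hmt.1.2)
    exact hT₀sep.2.2.2 hav
  exact hTH ⟨x, y, hTT₀ ▸ hT₀sep, hTT₀ ▸ hT₀min⟩

lemma part1 {G H : SimpleGraph V} [Finite V] (hmt : IsMinimalTriangulation G H) :
    MaxPairwiseParallel G (minSeps H) ∧ H = saturate G (minSeps H) :=
  ⟨⟨minSeps_sub_of_minimal hmt,
    fun _ hS _ hT _ => pairwise_parallel_of_minimal hmt hS hT,
    maximality_of_minimal hmt⟩, saturate_eq_of_minimal hmt⟩

end Part1

section SatUtils

variable {V : Type}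

lemma le_saturate (G : SimpleGraph V) (Φ : Set (Set V)) : G ≤ saturate G Φ :=
  fun {a b} h => ⟨h.ne, Or.inl h⟩

lemma saturate_empty (G : SimpleGraph V) : saturate G (∅ : Set (Set V)) = G := by
  apply SimpleGraph.ext
  ext a b
  constructor
  · rintro ⟨hne, h | ⟨S, hS, -⟩⟩
    · exact h
    · exact absurd hS (Set.notMem_empty S)
  · intro h
    exact ⟨h.ne, Or.inl h⟩

lemma saturate_insert (G : SimpleGraph V) (Φ : Set (Set V)) (T : Set V) :
    saturate G (insert T Φ) = saturate (saturate G Φ) {T} := by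
  apply SimpleGraph.ext
  ext a b
  constructor
  · rintro ⟨hne, h | ⟨S, hS, haS, hbS⟩⟩
    · exact ⟨hne, Or.inl ⟨hne, Or.inl h⟩⟩
    · rcases hS with rfl | hS
      · exact ⟨hne, Or.inr ⟨S, rfl, haS, hbS⟩⟩
      · exact ⟨hne, Or.inl ⟨hne, Or.inr ⟨S, hS, haS, hbS⟩⟩⟩
  · rintro ⟨hne, ⟨-, h | ⟨S, hS, haS, hbS⟩⟩ | ⟨S, hS, haS, hbS⟩⟩
    · exact ⟨hne, Or.inl h⟩
    · exact ⟨hne, Or.inr ⟨S, Set.mem_insert_of_mem _ hS, haS, hbS⟩⟩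
    · rcases hS with rfl
      exact ⟨hne, Or.inr ⟨S, Set.mem_insert _ _, haS, hbS⟩⟩

lemma AvoidReach.reachable {G : SimpleGraph V} {S : Set V} {x y : V}
    (h : AvoidReach G S x y) : G.Reachable x y := by
  obtain ⟨p, -⟩ := h
  exact ⟨p⟩

lemma minsep_reach {G : SimpleGraph V} {T : Set V} (hT : IsMinSeparator G T) :
    ∀ t1 ∈ T, ∀ t2 ∈ T, G.Reachable t1 t2 := by
  obtain ⟨x, y, hsep, hmin⟩ := hT
  have hfx := (full_compOf_of_minimal hsep hmin).1
  intro t1 ht1 t2 ht2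
  have h1 : t1 ∈ neighborsOf G (compOf G T x) := by rw [hfx]; exact ht1
  have h2 : t2 ∈ neighborsOf G (compOf G T x) := by rw [hfx]; exact ht2
  obtain ⟨-, u, hu, hut⟩ := h1
  obtain ⟨-, w, hw, hwt⟩ := h2
  exact (hut.symm.reachable.trans ((AvoidReach.symm hu).trans hw).reachable).trans
    hwt.reachable

lemma reachable_saturate {G : SimpleGraph V} {Φ : Set (Set V)}
    (hΦ : ∀ T ∈ Φ, ∀ t1 ∈ T, ∀ t2 ∈ T, G.Reachable t1 t2) {x y : V}
    (h : (saturate G Φ).Reachable x y) : G.Reachable x y := by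
  obtain ⟨w⟩ := h
  induction w with
  | nil => exact SimpleGraph.Reachable.refl _
  | cons hadj _ ih =>
    rcases hadj.2 with hG | ⟨S, hS, h1, h2⟩
    · exact hG.reachable.trans ih
    · exact (hΦ S hS _ h1 _ h2).trans ih

lemma parallel_reach {G : SimpleGraph V} {S T : Set V} (hpar : Parallel G S T)
    {t1 t2 : V} (h1 : t1 ∈ T) (h2 : t2 ∈ T) (h1S : t1 ∉ S) (h2S : t2 ∉ S) :
    AvoidReach G S t1 t2 := by
  have heq := hpar (show compOf G S t1 ∈ _ from
      ⟨isCompOf_compOf h1S, ⟨t1, mem_compOf_self h1S, h1⟩⟩)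
    (show compOf G S t2 ∈ _ from
      ⟨isCompOf_compOf h2S, ⟨t2, mem_compOf_self h2S, h2⟩⟩)
  have : t2 ∈ compOf G S t1 := by rw [heq]; exact mem_compOf_self h2S
  exact this

lemma avoidReach_saturate_le {G : SimpleGraph V} {T S : Set V}
    (hpar : Parallel G S T) {x y : V}
    (h : AvoidReach (saturate G {T}) S x y) : AvoidReach G S x y := by
  rw [avoidReach_iff] at h
  obtain ⟨hx, hrt⟩ := h
  have : ∀ c, Relation.ReflTransGen (AStep (saturate G {T}) S) x c →
      AvoidReach G S x c := by
    intro c hc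
    induction hc with
    | refl => exact avoidReach_refl hx
    | @tail c' c h1 h2 ih =>
      rcases h2.1.2 with hG | ⟨S', hS', h3, h4⟩
      · exact ih.trans (avoidReach_of_adj hG h2.2.1 h2.2.2)
      · rcases hS' with rfl
        exact ih.trans (parallel_reach hpar h3 h4 h2.2.1 h2.2.2)
  exact this y hrt

lemma avoidReach_in_comp {G : SimpleGraph V} {S C : Set V} (hC : IsCompOf G S C)
    {u w : V} (hu : u ∈ C) (hw : w ∈ C) {T : Set V} (hCT : ∀ v ∈ C, v ∉ T) :
    AvoidReach G T u w := by
  have h := hC.2.2.1 u hu w hw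
  rw [avoidReach_iff] at h
  have key : ∀ c, Relation.ReflTransGen (AStep G S) u c → c ∈ C ∧ AvoidReach G T u c := by
    intro c hc
    induction hc with
    | refl => exact ⟨hu, avoidReach_refl (hCT u hu)⟩
    | @tail c' c h1 h2 ih =>
      have hcC : c ∈ C := hC.adj_mem ih.1 h2.1 h2.2.2
      exact ⟨hcC, ih.2.trans (avoidReach_of_adj h2.1 (hCT c' ih.1) (hCT c hcC))⟩
  exact (key w h.2).2

lemma minSep_of_avoidEq {G G' : SimpleGraph V} (hle : G ≤ G') {S : Set V}
    (haeq : ∀ x y : V, AvoidReach G' S x y ↔ AvoidReach G S x y)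
    (hS : IsMinSeparator G S) : IsMinSeparator G' S := by
  obtain ⟨x, y, hsep, hmin⟩ := hS
  obtain ⟨hfx, hfy⟩ := full_compOf_of_minimal hsep hmin
  have hcomp : ∀ z : V, compOf G' S z = compOf G S z := by
    intro z
    ext w
    exact haeq z w
  have hsep' : IsSeparator G' S x y :=
    ⟨hsep.1, hsep.2.1, hsep.2.2.1.mono hle, fun h => hsep.2.2.2 ((haeq x y).1 h)⟩
  refine ⟨x, y, hsep', minimal_of_full hsep' ?_ ?_⟩
  · refine Set.Subset.antisymm (isCompOf_compOf hsep.1).neighbors_subset ?_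
    · intro s hs
      have : s ∈ neighborsOf G (compOf G S x) := by rw [hfx]; exact hs
      obtain ⟨hsC, u, hu, hus⟩ := this
      rw [hcomp x]
      exact ⟨hsC, u, hu, hle hus⟩
  · refine Set.Subset.antisymm (isCompOf_compOf hsep.2.1).neighbors_subset ?_
    · intro s hs
      have : s ∈ neighborsOf G (compOf G S y) := by rw [hfy]; exact hs
      obtain ⟨hsC, u, hu, hus⟩ := this
      rw [hcomp y]
      exact ⟨hsC, u, hu, hle hus⟩

lemma isCompOf_of_avoidEq {G G' : SimpleGraph V} {S : Set V}
    (haeq : ∀ x y : V, AvoidReach G' S x y ↔ AvoidReach G S x y) {C : Set V}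
    (h : IsCompOf G' S C) : IsCompOf G S C := by
  obtain ⟨z, hz⟩ := h.1
  have h2 := h.eq_compOf hz
  have h3 : compOf G' S z = compOf G S z := by
    ext w
    exact haeq z w
  rw [h2, h3]
  exact isCompOf_compOf (h.not_mem hz)

lemma parallel_of_avoidEq {G G' : SimpleGraph V} {S : Set V}
    (haeq : ∀ x y : V, AvoidReach G' S x y ↔ AvoidReach G S x y) {T : Set V}
    (h : Parallel G S T) : Parallel G' S T := by
  intro C hC C' hC'
  exact h ⟨isCompOf_of_avoidEq haeq hC.1, hC.2⟩ ⟨isCompOf_of_avoidEq haeq hC'.1, hC'.2⟩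

lemma parallel_symm {G : SimpleGraph V} [Finite V] {S T : Set V}
    (hS : IsMinSeparator G S) (h : Parallel G S T) : Parallel G T S := by
  obtain ⟨x, y, hsep, hmin⟩ := hS
  obtain ⟨hfx, hfy⟩ := full_compOf_of_minimal hsep hmin
  have hxy : compOf G S x ≠ compOf G S y := by
    intro he
    apply hsep.2.2.2
    have : y ∈ compOf G S x := by rw [he]; exact mem_compOf_self hsep.2.1
    exact this
  have hC' : ∃ C', IsCompOf G S C' ∧ neighborsOf G C' = S ∧ ∀ v ∈ C', v ∉ T := by
    by_cases h1 : (compOf G S x ∩ T) = ∅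
    · exact ⟨compOf G S x, isCompOf_compOf hsep.1, hfx,
        fun v hv hvT => (Set.eq_empty_iff_forall_notMem.1 h1 v) ⟨hv, hvT⟩⟩
    · refine ⟨compOf G S y, isCompOf_compOf hsep.2.1, hfy, ?_⟩
      intro v hv hvT
      have h2 : (compOf G S y ∩ T).Nonempty := ⟨v, hv, hvT⟩
      have := h ⟨isCompOf_compOf hsep.1, Set.nonempty_iff_ne_empty.2 h1⟩
        ⟨isCompOf_compOf hsep.2.1, h2⟩
      exact hxy this
  obtain ⟨C', hC'c, hC'f, hC'T⟩ := hC'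
  intro D1 hD1 D2 hD2
  obtain ⟨s1, hs1D, hs1S⟩ := hD1.2
  obtain ⟨s2, hs2D, hs2S⟩ := hD2.2
  have hs1T : s1 ∉ T := hD1.1.not_mem hs1D
  have hs2T : s2 ∉ T := hD2.1.not_mem hs2D
  have h1 : s1 ∈ neighborsOf G C' := by rw [hC'f]; exact hs1S
  have h2 : s2 ∈ neighborsOf G C' := by rw [hC'f]; exact hs2S
  obtain ⟨-, u, huC, hus1⟩ := h1
  obtain ⟨-, w, hwC, hws2⟩ := h2
  have havs : AvoidReach G T s1 s2 :=
    ((avoidReach_of_adj hus1.symm hs1T (hC'T u huC)).trans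
      (avoidReach_in_comp hC'c huC hwC hC'T)).trans
      (avoidReach_of_adj hws2 (hC'T w hwC) hs2T)
  exact hD1.1.eq_of_mem hD2.1 (hD1.1.mem_of_avoidReach hs1D havs) hs2D

end SatUtils

section C2

variable {V : Type}

lemma minSep_unsaturate {B : SimpleGraph V} [Finite V] {T : Set V}
    (hT : IsMinSeparator B T) {S : Set V}
    (hS : IsMinSeparator (saturate B {T}) S) :
    IsMinSeparator B S ∧ Parallel B S T := by
  obtain ⟨x, y, hsep, hmin⟩ := hS
  obtain ⟨hfx, hfy⟩ := full_compOf_of_minimal hsep hmin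
  have hle : B ≤ saturate B {T} := le_saturate B {T}
  have hreach' : ∀ u w : V, (saturate B {T}).Reachable u w → B.Reachable u w := by
    intro u w h
    refine reachable_saturate ?_ h
    intro T' hT' t1 h1 t2 h2
    rw [Set.mem_singleton_iff] at hT'
    subst hT'
    exact minsep_reach hT t1 h1 t2 h2
  have hsepB : IsSeparator B S x y :=
    ⟨hsep.1, hsep.2.1, hreach' x y hsep.2.2.1, fun h => hsep.2.2.2 (h.mono hle)⟩
  by_cases hTS : T ⊆ S
  · have haeq : ∀ u w : V, AvoidReach (saturate B {T}) S u w ↔ AvoidReach B S u w := by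
      intro u w
      constructor
      · intro h
        rw [avoidReach_iff] at h ⊢
        obtain ⟨hu, hrt⟩ := h
        refine ⟨hu, Relation.ReflTransGen.mono ?_ _ _ hrt⟩
        rintro a b ⟨⟨hne, hG | ⟨S', hS', h1, h2⟩⟩, ha, hb⟩
        · exact ⟨hG, ha, hb⟩
        · rw [Set.mem_singleton_iff] at hS'
          subst hS'
          exact absurd (hTS h1) ha
      · intro h; exact h.mono hle
    constructor
    · have hcomp : ∀ z : V, compOf (saturate B {T}) S z = compOf B S z := by
        intro z; ext w; exact haeq z w
      refine ⟨x, y, hsepB, minimal_of_full hsepB ?_ ?_⟩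
      · refine Set.Subset.antisymm (isCompOf_compOf hsep.1).neighbors_subset ?_
        intro s hs
        have h1 : s ∈ neighborsOf (saturate B {T}) (compOf (saturate B {T}) S x) := by
          rw [hfx]; exact hs
        obtain ⟨hsC, u, hu, hus⟩ := h1
        rw [hcomp x] at hsC hu
        refine ⟨hsC, u, hu, ?_⟩
        rcases hus.2 with hG | ⟨S', hS', h1', h2'⟩
        · exact hG
        · rw [Set.mem_singleton_iff] at hS'
          subst hS'
          exact absurd (hTS h1') (AvoidReach.notMem_right hu)
      · refine Set.Subset.antisymm (isCompOf_compOf hsep.2.1).neighbors_subset ?_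
        intro s hs
        have h1 : s ∈ neighborsOf (saturate B {T}) (compOf (saturate B {T}) S y) := by
          rw [hfy]; exact hs
        obtain ⟨hsC, u, hu, hus⟩ := h1
        rw [hcomp y] at hsC hu
        refine ⟨hsC, u, hu, ?_⟩
        rcases hus.2 with hG | ⟨S', hS', h1', h2'⟩
        · exact hG
        · rw [Set.mem_singleton_iff] at hS'
          subst hS'
          exact absurd (hTS h1') (AvoidReach.notMem_right hu)
    · intro C hC C' hC'
      exfalso
      obtain ⟨t, htC, htT⟩ := hC.2
      exact hC.1.not_mem htC (hTS htT)
  · rw [Set.not_subset] at hTS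
    obtain ⟨tstar, htT, htS⟩ := hTS
    have hTD : ∀ t ∈ T, t ∉ S → t ∈ compOf (saturate B {T}) S tstar := by
      intro t ht htS'
      by_cases he : t = tstar
      · subst he; exact mem_compOf_self htS'
      · have hadj : (saturate B {T}).Adj tstar t :=
          ⟨fun h => he h.symm, Or.inr ⟨T, rfl, htT, ht⟩⟩
        exact avoidReach_of_adj hadj htS htS'
    have hfar : ∀ C, IsCompOf (saturate B {T}) S C →
        C ≠ compOf (saturate B {T}) S tstar →
        IsCompOf B S C ∧ neighborsOf (saturate B {T}) C = neighborsOf B C := by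
      intro C hC hCD
      have hCT : ∀ v ∈ C, v ∉ T := by
        intro v hv hvT
        exact hCD (hC.eq_of_mem (isCompOf_compOf htS) hv (hTD v hvT (hC.not_mem hv)))
      have hstay : ∀ u, u ∈ C → ∀ c,
          Relation.ReflTransGen (AStep (saturate B {T}) S) u c →
          c ∈ C ∧ Relation.ReflTransGen (AStep B S) u c := by
        intro u hu c hc
        induction hc with
        | refl => exact ⟨hu, .refl⟩
        | @tail c' c h1 h2 ih =>
          have hc'C := ih.1
          have hcC : c ∈ C := hC.adj_mem hc'C h2.1 h2.2.2
          have hBadj : B.Adj c' c := by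
            rcases h2.1.2 with hG | ⟨S', hS', h3, h4⟩
            · exact hG
            · rw [Set.mem_singleton_iff] at hS'
              subst hS'
              exact absurd h3 (hCT c' hc'C)
          exact ⟨hcC, ih.2.tail ⟨hBadj, h2.2.1, h2.2.2⟩⟩
      constructor
      · refine ⟨hC.1, hC.2.1, ?_, ?_⟩
        · intro u hu w hw
          have h0 := hC.2.2.1 u hu w hw
          rw [avoidReach_iff] at h0 ⊢
          exact ⟨h0.1, (hstay u hu w h0.2).2⟩
        · intro C' hsub hdisj hconn
          exact hC.2.2.2 C' hsub hdisj (fun a ha b hb => (hconn a ha b hb).mono hle)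
      · ext s
        constructor
        · rintro ⟨hsC, u, hu, hus⟩
          refine ⟨hsC, u, hu, ?_⟩
          rcases hus.2 with hG | ⟨S', hS', h3, h4⟩
          · exact hG
          · rw [Set.mem_singleton_iff] at hS'
            subst hS'
            exact absurd h3 (hCT u hu)
        · rintro ⟨hsC, u, hu, hus⟩
          exact ⟨hsC, u, hu, hle hus⟩
    have hxyne : compOf (saturate B {T}) S x ≠ compOf (saturate B {T}) S y := by
      intro he
      apply hsep.2.2.2
      have h2 : y ∈ compOf (saturate B {T}) S x := by
        rw [he]; exact mem_compOf_self hsep.2.1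
      exact h2
    have hC0 : ∃ C0, IsCompOf (saturate B {T}) S C0 ∧
        neighborsOf (saturate B {T}) C0 = S ∧
        C0 ≠ compOf (saturate B {T}) S tstar := by
      by_cases h1 : compOf (saturate B {T}) S x = compOf (saturate B {T}) S tstar
      · exact ⟨compOf (saturate B {T}) S y, isCompOf_compOf hsep.2.1, hfy,
          fun h => hxyne (h1.trans h.symm)⟩
      · exact ⟨compOf (saturate B {T}) S x, isCompOf_compOf hsep.1, hfx, h1⟩
    obtain ⟨C0, hC0c, hC0f, hC0D⟩ := hC0
    obtain ⟨hC0B, hC0N⟩ := hfar C0 hC0c hC0D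
    have hC0NB : neighborsOf B C0 = S := by rw [← hC0N, hC0f]
    obtain ⟨c0, hc0⟩ := hC0B.1
    have hC0T : ∀ v ∈ C0, v ∉ T := by
      intro v hv hvT
      exact hC0D (hC0c.eq_of_mem (isCompOf_compOf htS) hv
        (hTD v hvT (hC0c.not_mem hv)))
    have hc0T : c0 ∉ T := hC0T c0 hc0
    have hC0W : ∀ u ∈ C0, u ∈ compOf B T c0 := by
      intro u hu
      exact avoidReach_in_comp hC0B hc0 hu hC0T
    have hSW : ∀ s ∈ S, s ∉ T → s ∈ compOf B T c0 := by
      intro s hsS hsT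
      have h1 : s ∈ neighborsOf B C0 := by rw [hC0NB]; exact hsS
      obtain ⟨-, u, hu, hus⟩ := h1
      exact AvoidReach.trans (hC0W u hu) (avoidReach_of_adj hus (hC0T u hu) hsT)
    obtain ⟨xT, yT, hsepT, hminT⟩ := hT
    obtain ⟨hfxT, hfyT⟩ := full_compOf_of_minimal hsepT hminT
    have hFne : compOf B T xT ≠ compOf B T yT := by
      intro he
      apply hsepT.2.2.2
      have h2 : yT ∈ compOf B T xT := by
        rw [he]; exact mem_compOf_self hsepT.2.1
      exact h2
    have hF : ∃ F, IsCompOf B T F ∧ neighborsOf B F = T ∧ F ≠ compOf B T c0 := by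
      by_cases h1 : compOf B T xT = compOf B T c0
      · exact ⟨compOf B T yT, isCompOf_compOf hsepT.2.1, hfyT,
          fun h => hFne (h1.trans h.symm)⟩
      · exact ⟨compOf B T xT, isCompOf_compOf hsepT.1, hfxT, h1⟩
    obtain ⟨F, hFc, hFf, hFW⟩ := hF
    have hFS : ∀ v ∈ F, v ∉ S := by
      intro v hv hvS
      have hvT : v ∉ T := hFc.not_mem hv
      exact hFW (hFc.eq_of_mem (isCompOf_compOf hc0T) hv (hSW v hvS hvT))
    obtain ⟨f0, hf0⟩ := hFc.1
    have hf0S : f0 ∉ S := hFS f0 hf0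
    have hEc : IsCompOf B S (compOf B S f0) := isCompOf_compOf hf0S
    have hFE : ∀ u ∈ F, u ∈ compOf B S f0 := by
      intro u hu
      exact avoidReach_in_comp hFc hf0 hu hFS
    have hTE : ∀ t ∈ T, t ∉ S → t ∈ compOf B S f0 := by
      intro t htT' htS'
      have h1 : t ∈ neighborsOf B F := by rw [hFf]; exact htT'
      obtain ⟨-, u, hu, hut⟩ := h1
      exact AvoidReach.trans (hFE u hu) (avoidReach_of_adj hut (hFS u hu) htS')
    have hDE : compOf (saturate B {T}) S tstar = compOf B S f0 := by
      apply Set.Subset.antisymm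
      · intro u hu
        have hu' : AvoidReach (saturate B {T}) S tstar u := hu
        rw [avoidReach_iff] at hu'
        have key : ∀ c, Relation.ReflTransGen (AStep (saturate B {T}) S) tstar c →
            c ∈ compOf B S f0 := by
          intro c hc
          induction hc with
          | refl => exact hTE tstar htT htS
          | @tail c' c h1 h2 ih =>
            rcases h2.1.2 with hG | ⟨S', hS', h3, h4⟩
            · exact AvoidReach.trans ih (avoidReach_of_adj hG h2.2.1 h2.2.2)
            · rw [Set.mem_singleton_iff] at hS'
              subst hS'
              exact hTE c h4 h2.2.2
        exact key u hu'.2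
      · intro e he
        have h1 : AvoidReach B S f0 tstar := hTE tstar htT htS
        exact AvoidReach.trans (h1.symm.mono hle) (AvoidReach.mono hle he)
    have hDfull : neighborsOf (saturate B {T}) (compOf (saturate B {T}) S tstar) = S →
        neighborsOf B (compOf B S f0) = S := by
      intro hfull
      refine Set.Subset.antisymm hEc.neighbors_subset ?_
      intro s hsS
      have hs' : s ∈ neighborsOf (saturate B {T}) (compOf (saturate B {T}) S tstar) := by
        rw [hfull]; exact hsS
      obtain ⟨hsD, u, hu, hus⟩ := hs'
      have hsE : s ∉ compOf B S f0 := fun h => compOf_disjoint.le_bot ⟨h, hsS⟩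
      rcases hus.2 with hG | ⟨S', hS', h3, h4⟩
      · refine ⟨hsE, u, ?_, hG⟩
        rw [← hDE]
        exact hu
      · rw [Set.mem_singleton_iff] at hS'
        subst hS'
        have h5 : s ∈ neighborsOf B F := by rw [hFf]; exact h4
        obtain ⟨-, w, hw, hws⟩ := h5
        exact ⟨hsE, w, hFE w hw, hws⟩
    have key : ∀ z : V, ∀ hz : z ∉ S,
        neighborsOf (saturate B {T}) (compOf (saturate B {T}) S z) = S →
        neighborsOf B (compOf B S z) = S := by
      intro z hz hfz
      by_cases hzD : compOf (saturate B {T}) S z = compOf (saturate B {T}) S tstar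
      · have hzE : z ∈ compOf B S f0 := by
          rw [← hDE, ← hzD]
          exact mem_compOf_self hz
        have h6 : compOf B S z = compOf B S f0 := (hEc.eq_compOf hzE).symm
        rw [h6]
        exact hDfull (hzD ▸ hfz)
      · obtain ⟨hcomp, hNeq⟩ := hfar _ (isCompOf_compOf hz) hzD
        have hzmem : z ∈ compOf (saturate B {T}) S z := mem_compOf_self hz
        have h6 : compOf (saturate B {T}) S z = compOf B S z := hcomp.eq_compOf hzmem
        rw [← h6, ← hNeq]
        exact hfz
    refine ⟨⟨x, y, hsepB, minimal_of_full hsepB (key x hsep.1 hfx) (key y hsep.2.1 hfy)⟩, ?_⟩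
    intro C hC C'' hC''
    obtain ⟨t1, ht1C, ht1T⟩ := hC.2
    obtain ⟨t2, ht2C, ht2T⟩ := hC''.2
    have h1 : t1 ∈ compOf B S f0 := hTE t1 ht1T (hC.1.not_mem ht1C)
    have h2 : t2 ∈ compOf B S f0 := hTE t2 ht2T (hC''.1.not_mem ht2C)
    rw [hC.1.eq_of_mem hEc ht1C h1, hC''.1.eq_of_mem hEc ht2C h2]

end C2

section Part2

variable {V : Type}

lemma parallel_self {G : SimpleGraph V} {T : Set V} : Parallel G T T := by
  intro C hC C' hC'
  exfalso
  obtain ⟨t, htC, htT⟩ := hC.2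
  exact hC.1.not_mem htC htT

lemma lemmaE {G : SimpleGraph V} [Finite V] (Φ : Set (Set V)) :
    Φ ⊆ minSeps G → Φ.Pairwise (Parallel G) →
      ((∀ S : Set V, IsMinSeparator G S → (∀ T ∈ Φ, Parallel G S T) →
          (∀ x y : V, AvoidReach (saturate G Φ) S x y ↔ AvoidReach G S x y) ∧
            IsMinSeparator (saturate G Φ) S) ∧
        (∀ S : Set V, IsMinSeparator (saturate G Φ) S →
          IsMinSeparator G S ∧ ∀ T ∈ Φ, Parallel G S T)) := by
  refine Set.Finite.induction_on (motive := fun Φ _ => Φ ⊆ minSeps G → Φ.Pairwise (Parallel G) →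
      ((∀ S : Set V, IsMinSeparator G S → (∀ T ∈ Φ, Parallel G S T) →
          (∀ x y : V, AvoidReach (saturate G Φ) S x y ↔ AvoidReach G S x y) ∧
            IsMinSeparator (saturate G Φ) S) ∧
        (∀ S : Set V, IsMinSeparator (saturate G Φ) S →
          IsMinSeparator G S ∧ ∀ T ∈ Φ, Parallel G S T)))
    Φ (Set.toFinite Φ) ?_ ?_
  · intro _ _
    constructor
    · intro S hS _
      constructor
      · intro x y; rw [saturate_empty]
      · rw [saturate_empty]; exact hS
    · intro S hS
      rw [saturate_empty] at hS
      exact ⟨hS, fun T hT => absurd hT (Set.notMem_empty T)⟩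
  · intro T Φ₀ hTΦ hfin IH hsub hpw
    have hT : IsMinSeparator G T := hsub (Set.mem_insert _ _)
    have hΦ₀sub : Φ₀ ⊆ minSeps G := fun S hS => hsub (Set.mem_insert_of_mem _ hS)
    have hΦ₀pw : Φ₀.Pairwise (Parallel G) := hpw.mono (Set.subset_insert _ _)
    obtain ⟨IH1, IH2⟩ := IH hΦ₀sub hΦ₀pw
    have hTpar : ∀ T' ∈ Φ₀, Parallel G T T' := by
      intro T' hT'
      exact hpw (Set.mem_insert _ _) (Set.mem_insert_of_mem _ hT')
        (fun h => hTΦ (h ▸ hT'))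
    obtain ⟨haeqT, hTB⟩ := IH1 T hT hTpar
    have hsatins := saturate_insert G Φ₀ T
    constructor
    · intro S hS hpar
      have hparΦ₀ : ∀ T' ∈ Φ₀, Parallel G S T' :=
        fun T' h => hpar T' (Set.mem_insert_of_mem _ h)
      obtain ⟨haeqS, hSB⟩ := IH1 S hS hparΦ₀
      have hparB : Parallel (saturate G Φ₀) S T :=
        parallel_of_avoidEq haeqS (hpar T (Set.mem_insert _ _))
      have haeq2 : ∀ x y : V, AvoidReach (saturate G (insert T Φ₀)) S x y ↔
          AvoidReach G S x y := by
        intro x y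
        rw [hsatins]
        constructor
        · intro h
          exact (haeqS x y).1 (avoidReach_saturate_le hparB h)
        · intro h
          exact ((haeqS x y).2 h).mono (le_saturate _ _)
      exact ⟨haeq2, minSep_of_avoidEq (le_saturate _ _) haeq2 hS⟩
    · intro S hS
      rw [hsatins] at hS
      obtain ⟨hSB, hparB⟩ := minSep_unsaturate hTB hS
      obtain ⟨hSG, hparsG⟩ := IH2 S hSB
      obtain ⟨haeqS, -⟩ := IH1 S hSG hparsG
      have hparG : Parallel G S T := by
        intro C hC C' hC'
        exact hparB ⟨isCompOf_of_avoidEq (fun x y => (haeqS x y).symm) hC.1, hC.2⟩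
          ⟨isCompOf_of_avoidEq (fun x y => (haeqS x y).symm) hC'.1, hC'.2⟩
      refine ⟨hSG, ?_⟩
      intro T' hT'
      rcases hT' with rfl | hT'
      · exact hparG
      · exact hparsG T' hT'

lemma part2 {G : SimpleGraph V} [Finite V] {Φ : Set (Set V)}
    (hΦ : MaxPairwiseParallel G Φ) :
    IsMinimalTriangulation G (saturate G Φ) ∧ minSeps (saturate G Φ) = Φ := by
  obtain ⟨hsub, hpw, hmax⟩ := hΦ
  obtain ⟨E1, E2⟩ := lemmaE Φ hsub hpw
  have hparAll : ∀ T ∈ Φ, ∀ T' ∈ Φ, Parallel G T T' := by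
    intro T hT T' hT'
    by_cases he : T' = T
    · subst he; exact parallel_self
    · exact hpw hT hT' (fun h => he h.symm)
  have hseps : minSeps (saturate G Φ) = Φ := by
    apply Set.Subset.antisymm
    · intro S hS
      obtain ⟨hSG, hpar⟩ := E2 S hS
      have hpar' : ∀ T ∈ Φ, Parallel G T S := fun T hT => parallel_symm hSG (hpar T hT)
      have h1 : insert S Φ ⊆ minSeps G := by
        intro T hT
        rcases hT with rfl | hT
        · exact hSG
        · exact hsub hT
      have h2 : (insert S Φ).Pairwise (Parallel G) := by
        intro A hA B' hB' hAB
        rcases hA with rfl | hA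
        · rcases hB' with rfl | hB'
          · exact absurd rfl hAB
          · exact hpar B' hB'
        · rcases hB' with rfl | hB'
          · exact hpar' A hA
          · exact hpw hA hB' hAB
      have hΨ := hmax (insert S Φ) h1 h2 (Set.subset_insert _ _)
      rw [← hΨ]
      exact Set.mem_insert _ _
    · intro T hT
      exact (E1 T (hsub hT) (hparAll T hT)).2
  have hcliques : ∀ S : Set V, IsMinSeparator (saturate G Φ) S →
      (saturate G Φ).IsClique S := by
    intro S hS
    have hSΦ : S ∈ Φ := by rw [← hseps]; exact hS
    intro a ha b hb hab
    exact ⟨hab, Or.inr ⟨S, hSΦ, ha, hb⟩⟩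
  have hch : IsChordal (saturate G Φ) := chordal_of_cliques hcliques
  refine ⟨⟨⟨hch, le_saturate _ _⟩, ?_⟩, hseps⟩
  intro H' hH' hle'
  have hclT : ∀ T ∈ Φ, ∀ a ∈ T, ∀ b ∈ T, a ≠ b → H'.Adj a b := by
    intro T hTΦ a ha b hb hab
    obtain ⟨x, y, hsep, hmin⟩ := hsub hTΦ
    obtain ⟨hfx, hfy⟩ := full_compOf_of_minimal hsep hmin
    obtain ⟨haeqT, -⟩ := E1 T (hsub hTΦ) (hparAll T hTΦ)
    have hnoH' : ¬AvoidReach H' T x y := by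
      intro h
      exact hsep.2.2.2 ((haeqT x y).1 (h.mono hle'))
    have hsepH' : IsSeparator H' T x y :=
      ⟨hsep.1, hsep.2.1, hsep.2.2.1.mono hH'.2, hnoH'⟩
    obtain ⟨T₀, hT₀sub, hT₀sep, hT₀min⟩ := exists_minimal_separator hsepH'
    have hTT₀ : T = T₀ := by
      refine Set.Subset.antisymm ?_ hT₀sub
      intro t htT
      by_contra htT₀
      have h1 : t ∈ neighborsOf G (compOf G T x) := by rw [hfx]; exact htT
      have h2 : t ∈ neighborsOf G (compOf G T y) := by rw [hfy]; exact htT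
      obtain ⟨-, u, hu, hut⟩ := h1
      obtain ⟨-, w, hw, hwt⟩ := h2
      have huT : u ∉ T := AvoidReach.notMem_right hu
      have hwT : w ∉ T := AvoidReach.notMem_right hw
      have hav : AvoidReach H' T₀ x y :=
        ((((hu.mono_set hT₀sub).mono hH'.2).trans
          (avoidReach_of_adj (hH'.2 hut) (fun hh => huT (hT₀sub hh)) htT₀)).trans
          (avoidReach_of_adj (hH'.2 hwt.symm) htT₀ (fun hh => hwT (hT₀sub hh)))).trans
          ((hw.symm.mono_set hT₀sub).mono hH'.2)
      exact hT₀sep.2.2.2 hav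
    have hTΔ : IsMinSeparator H' T := ⟨x, y, hTT₀ ▸ hT₀sep, hTT₀ ▸ hT₀min⟩
    exact clique_minSeps_of_chordal hH'.1 hTΔ ha hb hab
  apply le_antisymm hle'
  intro a b hab2
  rcases hab2.2 with hG | ⟨S, hSΦ, haS, hbS⟩
  · exact hH'.2 hG
  · exact hclT S hSΦ a haS b hbS hab2.1

end Part2

/-- If `H` is a minimal triangulation of `G` then `Δ(H)` is a
maximal pairwise-parallel set of minimal separators of `G` and `H = G_{Δ(H)}`;
conversely, for any maximal pairwise-parallel set `Φ` of minimal separators of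
`G`, `G_Φ` is a minimal triangulation of `G` with `Δ(G_Φ) = Φ`. -/
theorem minimal_triangulations_via_parallel_minimal_separators
    {V : Type} [Fintype V] (G : SimpleGraph V) :
    (∀ H : SimpleGraph V, IsMinimalTriangulation G H →
        MaxPairwiseParallel G (minSeps H) ∧ H = saturate G (minSeps H)) ∧
      (∀ Φ : Set (Set V), MaxPairwiseParallel G Φ →
        IsMinimalTriangulation G (saturate G Φ) ∧ minSeps (saturate G Φ) = Φ) := by
  constructor
  · intro H hmt
    exact part1 hmt
  · intro Φ hΦ
    exact part2 hΦ

end PMCPP
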